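/- arXiv:1309.5170 — 6 statements merged into one kernel-verified Lean document; each statement's English description precedes it below -/
import Mathlib

section
/- For every natural number s ≥ 1 and every real t > 0, the absolute value of the s-th remainder of the Taylor series of exp(-t) satisfies t^s/((s-1)!·(t+s)) < |∑_{k=s}^∞ (-t)^k/k!| < t^s/((s-1)!·(t+s-1)). -/
open MeasureTheory intervalIntegral Finset

noncomputable def Jint (n : ℕ) (t : ℝ) : ℝ := ∫ u in (0:ℝ)..t, (t - u) ^ n * Real.exp (-u)

lemma Jint_zero (t : ℝ) : Jint 0 t = 1 - Real.exp (-t) := by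
  have : Jint 0 t = ∫ u in (0:ℝ)..t, Real.exp (-u) := by
    unfold Jint; simp
  rw [this, intervalIntegral.integral_comp_neg (fun x => Real.exp x), integral_exp]
  simp

lemma Jint_rec (n : ℕ) (t : ℝ) :
    Jint (n + 1) t = t ^ (n + 1) - (n + 1) * Jint n t := by
  have hu : ∀ x ∈ Set.uIcc (0:ℝ) t,
      HasDerivAt (fun x => (t - x) ^ (n+1)) (-(((n:ℝ)+1) * (t - x) ^ n)) x := by
    intro x _
    have h1 : HasDerivAt (fun x : ℝ => t - x) (-1) x := by
      simpa using (hasDerivAt_id x).const_sub t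
    have := h1.fun_pow (n+1)
    refine this.congr_deriv ?_
    push_cast
    simp
  have hv : ∀ x ∈ Set.uIcc (0:ℝ) t,
      HasDerivAt (fun x => -Real.exp (-x)) (Real.exp (-x)) x := by
    intro x _
    have h1 : HasDerivAt (fun x : ℝ => Real.exp (-x)) (-Real.exp (-x)) x := by
      simpa [Function.comp_def] using (Real.hasDerivAt_exp (-x)).comp x (hasDerivAt_neg x)
    have h2 := h1.neg; rw [neg_neg] at h2; exact h2
  have hu' : IntervalIntegrable (fun x => -(((n:ℝ)+1) * (t - x) ^ n)) volume 0 t := by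
    apply Continuous.intervalIntegrable; fun_prop
  have hv' : IntervalIntegrable (fun x => Real.exp (-x)) volume 0 t := by
    apply Continuous.intervalIntegrable; fun_prop
  have h := intervalIntegral.integral_mul_deriv_eq_deriv_mul hu hv hu' hv'
  unfold Jint
  rw [h]
  have e1 : ∀ x, (-(((n:ℝ)+1) * (t - x) ^ n)) * (-Real.exp (-x))
      = ((n:ℝ)+1) * ((t - x) ^ n * Real.exp (-x)) := by intro x; ring
  simp_rw [e1]
  rw [intervalIntegral.integral_const_mul]
  simp

lemma rpow_le_exp_aux {t x : ℝ} (ht : 0 < t) (hx0 : 0 ≤ x) (hxt : x ≤ t) :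
    ((t - x)/t) ^ (t : ℝ) ≤ Real.exp (-x) := by
  rcases eq_or_lt_of_le hxt with rfl | hlt
  · rw [sub_self, zero_div, Real.zero_rpow ht.ne']
    exact (Real.exp_pos _).le
  · have hb : 0 < (t - x)/t := div_pos (by linarith) ht
    rw [Real.rpow_def_of_pos hb]
    apply Real.exp_le_exp.mpr
    have hlog : Real.log ((t - x)/t) ≤ (t - x)/t - 1 := Real.log_le_sub_one_of_pos hb
    have : (t - x)/t - 1 = -x/t := by field_simp; ring
    rw [this] at hlog
    have hmul := mul_le_mul_of_nonneg_right hlog ht.le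
    have he2 : -x/t * t = -x := by field_simp
    nlinarith [hmul, he2]

lemma rpow_lt_exp_aux {t x : ℝ} (ht : 0 < t) (hx0 : 0 < x) (hxt : x < t) :
    ((t - x)/t) ^ (t : ℝ) < Real.exp (-x) := by
  have hb : 0 < (t - x)/t := div_pos (by linarith) ht
  rw [Real.rpow_def_of_pos hb]
  apply Real.exp_lt_exp.mpr
  have hne : (t - x)/t ≠ 1 := by
    intro hc
    rw [div_eq_one_iff_eq ht.ne'] at hc
    linarith
  have hlog : Real.log ((t - x)/t) < (t - x)/t - 1 := Real.log_lt_sub_one_of_pos hb hne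
  have he : (t - x)/t - 1 = -x/t := by field_simp; ring
  rw [he] at hlog
  have hmul := mul_lt_mul_of_pos_right hlog ht
  have he2 : -x/t * t = -x := by field_simp
  nlinarith [hmul, he2]

lemma Jint_lower {n : ℕ} {t : ℝ} (ht : 0 < t) :
    t ^ (n + 1) / (t + n + 1) < Jint n t := by
  have hcont1 : Continuous (fun u : ℝ => (t - u)^n * ((t - u)/t) ^ (t : ℝ)) := by
    apply Continuous.mul
    · fun_prop
    · exact ((continuous_const.sub continuous_id).div_const t).rpow_const
        (fun x => Or.inr ht.le)
  have hcont2 : Continuous (fun u : ℝ => (t - u)^n * Real.exp (-u)) := by fun_prop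
  have key : (∫ u in (0:ℝ)..t, (t - u)^n * ((t - u)/t) ^ (t : ℝ)) < Jint n t := by
    apply intervalIntegral.integral_lt_integral_of_continuousOn_of_le_of_exists_lt ht
      hcont1.continuousOn hcont2.continuousOn
    · intro x hx
      have hx0 : (0:ℝ) < x := hx.1
      have hxt : x ≤ t := hx.2
      have hb : (0:ℝ) ≤ (t - x)^n := by
        apply pow_nonneg; linarith
      exact mul_le_mul_of_nonneg_left (rpow_le_exp_aux ht hx0.le hxt) hb
    · refine ⟨t/2, ⟨by linarith, by linarith⟩, ?_⟩
      have h1 : (0:ℝ) < t/2 := by linarith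
      have h2 : t/2 < t := by linarith
      have hb : (0:ℝ) < (t - t/2)^n := by
        apply pow_pos; linarith
      exact mul_lt_mul_of_pos_left (rpow_lt_exp_aux ht h1 h2) hb
  have comp : (∫ u in (0:ℝ)..t, (t - u)^n * ((t - u)/t) ^ (t : ℝ))
      = t ^ (n + 1) / (t + n + 1) := by
    have e1 : (∫ u in (0:ℝ)..t, (t - u)^n * ((t - u)/t) ^ (t : ℝ))
        = ∫ x in (0:ℝ)..t, x^n * (x/t) ^ (t : ℝ) := by
      have h := intervalIntegral.integral_comp_sub_left
        (a := (0:ℝ)) (b := t) (fun x => x^n * (x/t) ^ (t : ℝ)) t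
      simpa using h
    rw [e1]
    have e2 : Set.EqOn (fun x : ℝ => x^n * (x/t) ^ (t : ℝ))
        (fun x : ℝ => x ^ ((n : ℝ) + t) / t ^ (t : ℝ)) (Set.uIcc 0 t) := by
      intro x hx
      rw [Set.uIcc_of_le ht.le] at hx
      have hx0 : (0:ℝ) ≤ x := hx.1
      simp only
      rw [Real.div_rpow hx0 ht.le, ← Real.rpow_natCast x n,
        Real.rpow_add' hx0 (show (n:ℝ) + t ≠ 0 by positivity)]
      ring
    rw [intervalIntegral.integral_congr e2]
    rw [intervalIntegral.integral_div,
      integral_rpow (Or.inl (show (-1:ℝ) < (n : ℝ) + t by have := Nat.cast_nonneg (α := ℝ) n; linarith))]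
    rw [Real.zero_rpow (by positivity : (n : ℝ) + t + 1 ≠ 0)]
    have ha : t ^ ((n : ℝ) + t + 1) = t ^ (n + 1) * t ^ (t : ℝ) := by
      rw [show (n : ℝ) + t + 1 = ((n:ℝ) + 1) + t by ring, Real.rpow_add ht,
        ← Real.rpow_natCast t (n+1)]
      push_cast
      ring
    rw [ha]
    have htt : (0:ℝ) < t ^ (t : ℝ) := Real.rpow_pos_of_pos ht t
    field_simp
    ring
  linarith [key, comp]

lemma Jint_upper {n : ℕ} {t : ℝ} (ht : 0 < t) :
    Jint n t < t ^ (n + 1) / (t + n) := by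
  induction n with
  | zero =>
    rw [Jint_zero]
    have h1 : t ^ (0 + 1) / (t + (0:ℕ)) = 1 := by
      simp [div_self ht.ne']
    rw [h1]
    have := Real.exp_pos (-t); linarith
  | succ n ih =>
    rw [Jint_rec]
    have h := Jint_lower (n := n) ht
    have hpos : (0:ℝ) < t + n + 1 := by positivity
    have h' := (div_lt_iff₀ hpos).mp h
    have hcast : t + ((n+1 : ℕ) : ℝ) = t + n + 1 := by push_cast; ring
    rw [hcast, lt_div_iff₀ hpos]
    have hps : t ^ (n+1+1) = t ^ (n+1) * t := pow_succ t (n+1)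
    push_cast
    nlinarith [mul_lt_mul_of_pos_left h' (show (0:ℝ) < (n:ℝ)+1 by positivity), hps]

lemma Jint_eq (n : ℕ) (t : ℝ) :
    Jint n t = (-1) ^ (n + 1) * (Nat.factorial n : ℝ) *
      (Real.exp (-t) - ∑ k ∈ range (n + 1), (-t) ^ k / (Nat.factorial k : ℝ)) := by
  induction n with
  | zero => rw [Jint_zero]; simp
  | succ n ih =>
    rw [Jint_rec, ih, Finset.sum_range_succ _ (n+1), Nat.factorial_succ]
    have hfac : ((Nat.factorial n : ℝ)) ≠ 0 := by
      exact_mod_cast (Nat.factorial_pos n).ne'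
    have hn1 : ((n:ℝ) + 1) ≠ 0 := by positivity
    have h1 : (-1:ℝ) ^ (n+1) = -(-1) ^ n := by rw [pow_succ]; ring
    have h2 : (-1:ℝ) ^ (n+1+1) = (-1) ^ n := by rw [pow_succ, pow_succ]; ring
    push_cast
    rw [h1, h2]
    rcases Nat.even_or_odd n with hpar | hpar
    · rw [hpar.neg_one_pow, (hpar.add_one).neg_pow]
      field_simp
      ring
    · rw [hpar.neg_one_pow, (Odd.add_one hpar).neg_pow]
      field_simp
      ring

/-- For every natural number `s ≥ 1` and every real `t > 0`, the absolute
value of the `s`-th remainder of the Taylor series of `exp (-t)` satisfies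
`t^s/((s-1)!·(t+s)) < |∑_{k=s}^∞ (-t)^k/k!| < t^s/((s-1)!·(t+s-1))`. -/
theorem taylor_remainder_bounds (s : ℕ) (hs : 1 ≤ s) (t : ℝ) (ht : 0 < t) :
    t ^ s / ((Nat.factorial (s - 1) : ℝ) * (t + s)) <
      |∑' k : ℕ, (-t) ^ (k + s) / (Nat.factorial (k + s) : ℝ)| ∧
    |∑' k : ℕ, (-t) ^ (k + s) / (Nat.factorial (k + s) : ℝ)| <
      t ^ s / ((Nat.factorial (s - 1) : ℝ) * (t + s - 1)) := by
  obtain ⟨n, rfl⟩ : ∃ n, s = n + 1 := ⟨s - 1, (Nat.succ_pred_eq_of_pos hs).symm⟩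
  have hsum : Summable (fun k : ℕ => (-t) ^ k / (Nat.factorial k : ℝ)) :=
    Real.summable_pow_div_factorial (-t)
  have hexp : ∑' k : ℕ, (-t) ^ k / (Nat.factorial k : ℝ) = Real.exp (-t) := by
    rw [Real.exp_eq_exp_ℝ, NormedSpace.exp_eq_tsum_div]
  have htail : ∑' k : ℕ, (-t) ^ (k + (n+1)) / (Nat.factorial (k + (n+1)) : ℝ)
      = Real.exp (-t) - ∑ k ∈ range (n + 1), (-t) ^ k / (Nat.factorial k : ℝ) := by
    have := Summable.sum_add_tsum_nat_add (n + 1) hsum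
    rw [hexp] at this
    linarith
  have hJ := Jint_eq n t
  have habs : |∑' k : ℕ, (-t) ^ (k + (n+1)) / (Nat.factorial (k + (n+1)) : ℝ)|
      = Jint n t / (Nat.factorial n : ℝ) := by
    rw [htail]
    have h1 : Real.exp (-t) - ∑ k ∈ range (n + 1), (-t) ^ k / (Nat.factorial k : ℝ)
        = (-1) ^ (n+1) * (Jint n t / (Nat.factorial n : ℝ)) := by
      rw [hJ]
      have hfac : ((Nat.factorial n : ℝ)) ≠ 0 := by
        exact_mod_cast (Nat.factorial_pos n).ne'
      rcases Nat.even_or_odd (n+1) with hp | hp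
      · rw [hp.neg_one_pow]; field_simp
      · rw [hp.neg_one_pow]; field_simp
    have hlow := Jint_lower (n := n) ht
    have hJpos : 0 < Jint n t := lt_trans (by positivity) hlow
    rw [h1, abs_mul, abs_pow, abs_neg, abs_one, one_pow, one_mul,
      abs_of_pos (div_pos hJpos (by exact_mod_cast Nat.factorial_pos n))]
  have hfacpos : (0:ℝ) < (Nat.factorial n : ℝ) := by exact_mod_cast Nat.factorial_pos n
  have hlow := Jint_lower (n := n) ht
  have hupp := Jint_upper (n := n) ht
  simp only [Nat.add_sub_cancel] at *
  rw [habs]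
  constructor
  · have e1 : t ^ (n+1) / ((Nat.factorial n : ℝ) * (t + ((n:ℕ)+1 : ℕ)))
        = (t ^ (n+1) / (t + (n:ℝ) + 1)) / (Nat.factorial n : ℝ) := by
      rw [div_div]
      push_cast
      ring_nf
    rw [e1]
    exact div_lt_div_of_pos_right hlow hfacpos
  · have e2 : t ^ (n+1) / ((Nat.factorial n : ℝ) * (t + ((n:ℕ)+1 : ℕ) - 1))
        = (t ^ (n+1) / (t + (n:ℝ))) / (Nat.factorial n : ℝ) := by
      rw [div_div]
      push_cast
      ring_nf
    rw [e2]
    exact div_lt_div_of_pos_right hupp hfacpos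
end

section
/- For every natural number s ≥ 0 and real t > 0 the two-sided bound t/(t+s+1) < h_s(t) < t/(t+s) holds, where h_s(t) := F_{s+1}(t)/p_s(t), p_s(t) = t^s/s!, and F_{s+1}(t) = (-1)^{s+1} ∑_{k=s+1}^∞ (-t)^k/k!. -/
/-- `F_s(t) = (-1)^s ∑_{k=s}^∞ (-t)^k/k!`, the signed `s`-th Taylor remainder of `exp (-t)`. -/
noncomputable def taylorF (s : ℕ) (t : ℝ) : ℝ :=
  (-1 : ℝ) ^ s * ∑' k : ℕ, (-t) ^ (k + s) / (Nat.factorial (k + s) : ℝ)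

/-- `p_s(t) = t^s/s!`. -/
noncomputable def taylorP (s : ℕ) (t : ℝ) : ℝ := t ^ s / (Nat.factorial s : ℝ)

/-- `h_s(t) = F_{s+1}(t)/p_s(t)`. -/
noncomputable def taylorH (s : ℕ) (t : ℝ) : ℝ := taylorF (s + 1) t / taylorP s t

lemma summable_taylor (t : ℝ) (s : ℕ) :
    Summable (fun k : ℕ => (-t) ^ (k + s) / (Nat.factorial (k + s) : ℝ)) :=
  (summable_nat_add_iff s).2 (Real.summable_pow_div_factorial (-t))

lemma taylorF_zero (t : ℝ) : taylorF 0 t = Real.exp (-t) := by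
  rw [Real.exp_eq_exp_ℝ, NormedSpace.exp_eq_tsum_div]
  simp [taylorF]

lemma taylorF_succ (s : ℕ) (t : ℝ) : taylorF (s + 1) t = taylorP s t - taylorF s t := by
  have h0 := Summable.tsum_eq_zero_add (summable_taylor t s)
  have hre : (∑' k : ℕ, (-t) ^ (k + 1 + s) / (Nat.factorial (k + 1 + s) : ℝ))
      = ∑' k : ℕ, (-t) ^ (k + (s + 1)) / (Nat.factorial (k + (s + 1)) : ℝ) := by
    apply tsum_congr
    intro k
    rw [show k + 1 + s = k + (s + 1) by omega]
  rw [hre] at h0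
  simp only [zero_add] at h0
  have key : (-1 : ℝ) ^ s * (-t) ^ s = t ^ s := by
    rw [← mul_pow]; ring_nf
  unfold taylorF taylorP
  rw [h0]
  linear_combination key / (Nat.factorial s : ℝ)

lemma int_by_parts (s : ℕ) (t : ℝ) :
    ∫ v in (0:ℝ)..t, v ^ (s+1) * Real.exp v
      = t ^ (s+1) * Real.exp t - (s+1) * ∫ v in (0:ℝ)..t, v ^ s * Real.exp v := by
  have h := intervalIntegral.integral_mul_deriv_eq_deriv_mul
    (u := fun x : ℝ => x ^ (s+1)) (u' := fun x : ℝ => (s+1) * x ^ s)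
    (v := fun x : ℝ => Real.exp x) (v' := fun x : ℝ => Real.exp x)
    (a := (0:ℝ)) (b := t)
    (fun x _ => by simpa using (hasDerivAt_pow (s+1) x))
    (fun x _ => Real.hasDerivAt_exp x)
    (by apply Continuous.intervalIntegrable; continuity)
    (by apply Continuous.intervalIntegrable; continuity)
  simp only [mul_assoc] at h
  rw [intervalIntegral.integral_const_mul] at h
  rw [h]
  norm_num

lemma taylorF_integral (s : ℕ) (t : ℝ) :
    taylorF (s+1) t
      = Real.exp (-t) / (Nat.factorial s : ℝ) * ∫ v in (0:ℝ)..t, v ^ s * Real.exp v := by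
  induction s with
  | zero =>
      rw [taylorF_succ, taylorF_zero]
      simp [taylorP, Real.exp_neg]
      have h1 : Real.exp t ≠ 0 := Real.exp_ne_zero t
      field_simp
  | succ n ih =>
      rw [taylorF_succ, ih, int_by_parts]
      have hfac : ((Nat.factorial (n+1) : ℝ)) = (n+1) * (Nat.factorial n : ℝ) := by
        push_cast [Nat.factorial_succ]; ring
      have hne : (Nat.factorial n : ℝ) ≠ 0 := Nat.cast_ne_zero.2 (Nat.factorial_ne_zero n)
      have hexp : Real.exp (-t) * Real.exp t = 1 := by
        rw [← Real.exp_add]; simp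
      unfold taylorP
      rw [hfac]
      field_simp
      linear_combination (-(t^(n+1))) * hexp

lemma hasDerivAt_A (s : ℕ) (x : ℝ) :
    HasDerivAt (fun y : ℝ => ∫ v in (0:ℝ)..y, v ^ s * Real.exp v) (x ^ s * Real.exp x) x := by
  have hc : Continuous fun v : ℝ => v ^ s * Real.exp v := by continuity
  exact intervalIntegral.integral_hasDerivAt_right (hc.intervalIntegrable _ _)
    (hc.stronglyMeasurableAtFilter _ _) hc.continuousAt

lemma A_lower (s : ℕ) (t : ℝ) (ht : 0 < t) :
    t ^ (s+1) * Real.exp t / (t + s + 1) < ∫ v in (0:ℝ)..t, v ^ s * Real.exp v := by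
  set E : ℝ → ℝ := fun x => (∫ v in (0:ℝ)..x, v ^ s * Real.exp v) - x ^ (s+1) * Real.exp x / (x + s + 1) with hE
  have hden : ∀ x : ℝ, 0 ≤ x → x + s + 1 ≠ 0 := by
    intro x hx; positivity
  have hD : ∀ x : ℝ, 0 ≤ x → HasDerivAt E
      (x ^ s * Real.exp x * x / (x + s + 1) ^ 2) x := by
    intro x hx
    have h1 := hasDerivAt_A s x
    have h2 : HasDerivAt (fun y : ℝ => y ^ (s+1) * Real.exp y)
        ((s+1) * x ^ s * Real.exp x + x ^ (s+1) * Real.exp x) x := by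
      have := ((hasDerivAt_pow (s+1) x).fun_mul (Real.hasDerivAt_exp x))
      simpa using this
    have h3 : HasDerivAt (fun y : ℝ => y + s + 1) 1 x := by
      simpa [← add_assoc] using ((hasDerivAt_id x).add_const ((s:ℝ)+1))
    have h4 := h2.fun_div h3 (hden x hx)
    have h5 := h1.fun_sub h4
    refine h5.congr_deriv ?_
    field_simp
    ring
  have hmono : StrictMonoOn E (Set.Ici 0) := by
    apply strictMonoOn_of_deriv_pos (convex_Ici 0)
    · exact fun x hx => ((hD x hx).continuousAt.continuousWithinAt)
    · intro x hx
      rw [interior_Ici, Set.mem_Ioi] at hx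
      rw [(hD x (le_of_lt hx)).deriv]
      positivity
  have h0 : E 0 = 0 := by simp [hE]
  have := hmono (Set.self_mem_Ici) (Set.mem_Ici.2 ht.le) ht
  rw [h0] at this
  simpa [hE, sub_pos] using this

lemma A_upper (s : ℕ) (hs : 1 ≤ s) (t : ℝ) (ht : 0 < t) :
    (∫ v in (0:ℝ)..t, v ^ s * Real.exp v) < t ^ (s+1) * Real.exp t / (t + s) := by
  set E : ℝ → ℝ := fun x => x ^ (s+1) * Real.exp x / (x + s) - ∫ v in (0:ℝ)..x, v ^ s * Real.exp v with hE
  have hscast : (1:ℝ) ≤ (s:ℝ) := by exact_mod_cast hs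
  have hden : ∀ x : ℝ, 0 ≤ x → x + s ≠ 0 := by
    intro x hx; positivity
  have hD : ∀ x : ℝ, 0 ≤ x → HasDerivAt E
      (s * x ^ s * Real.exp x / (x + s) ^ 2) x := by
    intro x hx
    have h1 := hasDerivAt_A s x
    have h2 : HasDerivAt (fun y : ℝ => y ^ (s+1) * Real.exp y)
        ((s+1) * x ^ s * Real.exp x + x ^ (s+1) * Real.exp x) x := by
      have := ((hasDerivAt_pow (s+1) x).fun_mul (Real.hasDerivAt_exp x))
      simpa using this
    have h3 : HasDerivAt (fun y : ℝ => y + s) 1 x := by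
      simpa using ((hasDerivAt_id x).add_const ((s:ℝ)))
    have h4 := h2.fun_div h3 (hden x hx)
    have h5 := h4.fun_sub h1
    refine h5.congr_deriv ?_
    field_simp
    ring
  have hmono : StrictMonoOn E (Set.Ici 0) := by
    apply strictMonoOn_of_deriv_pos (convex_Ici 0)
    · exact fun x hx => ((hD x hx).continuousAt.continuousWithinAt)
    · intro x hx
      rw [interior_Ici, Set.mem_Ioi] at hx
      rw [(hD x (le_of_lt hx)).deriv]
      have : (0:ℝ) < s := lt_of_lt_of_le zero_lt_one hscast
      positivity
  have h0 : E 0 = 0 := by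
    simp [hE, zero_pow (Nat.succ_ne_zero s)]
  have := hmono (Set.self_mem_Ici) (Set.mem_Ici.2 ht.le) ht
  rw [h0] at this
  simpa [hE, sub_pos] using this

lemma taylorH_eq (s : ℕ) (t : ℝ) (ht : 0 < t) :
    taylorH s t = Real.exp (-t) * (∫ v in (0:ℝ)..t, v ^ s * Real.exp v) / t ^ s := by
  have hne : (Nat.factorial s : ℝ) ≠ 0 := Nat.cast_ne_zero.2 (Nat.factorial_ne_zero s)
  have htne : t ^ s ≠ 0 := pow_ne_zero s ht.ne'
  rw [taylorH, taylorF_integral, taylorP]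
  field_simp

/-- For every `s ≥ 0` and `t > 0`,
`t/(t+s+1) < h_s(t) < t/(t+s)`. -/
theorem h_two_sided_bounds (s : ℕ) (t : ℝ) (ht : 0 < t) :
    t / (t + s + 1) < taylorH s t ∧ taylorH s t < t / (t + s) := by
  have hexp : Real.exp (-t) * Real.exp t = 1 := by rw [← Real.exp_add]; simp
  have htpow : (0:ℝ) < t ^ s := pow_pos ht s
  have hH := taylorH_eq s t ht
  constructor
  · -- lower bound
    have hA := A_lower s t ht
    have hd : (0:ℝ) < t + s + 1 := by positivity
    calc t / (t + s + 1)
        = Real.exp (-t) * (t ^ (s+1) * Real.exp t / (t + s + 1)) / t ^ s := by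
          rw [Real.exp_neg, pow_succ]
          field_simp
      _ < Real.exp (-t) * (∫ v in (0:ℝ)..t, v ^ s * Real.exp v) / t ^ s := by
          gcongr
      _ = taylorH s t := hH.symm
  · -- upper bound
    rcases Nat.eq_zero_or_pos s with hs | hs
    · subst hs
      have h0 : taylorH 0 t = 1 - Real.exp (-t) := by
        rw [taylorH, taylorF_succ, taylorF_zero]
        have : taylorP 0 t = 1 := by simp [taylorP]
        rw [this]
        simp
      rw [h0]
      have : t / (t + (0:ℕ)) = 1 := by
        simp [div_self ht.ne']
      rw [this]
      linarith [Real.exp_pos (-t)]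
    · have hA := A_upper s hs t ht
      have hd : (0:ℝ) < t + s := by positivity
      calc taylorH s t
          = Real.exp (-t) * (∫ v in (0:ℝ)..t, v ^ s * Real.exp v) / t ^ s := hH
        _ < Real.exp (-t) * (t ^ (s+1) * Real.exp t / (t + s)) / t ^ s := by
            gcongr
        _ = t / (t + s) := by
            rw [Real.exp_neg, pow_succ]
            field_simp
end

section
/- For T > 0, s ∈ ℕ with s ≥ 1, and a > 0: the Lebesgue volume I(s,T,a) of P(s,T,a) := {x ∈ [0,∞)^s : ∏_{j=1}^s(x_j + a) ≤ T} equals 0 if T ≤ a^s, and equals T · F_s(ln T - s ln a) if T > a^s, where F_s(t) = (-1)^s ∑_{n=s}^∞ (-t)^n/n!. -/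
open MeasureTheory

/-- The corner smooth hyperbolic cross `P(s,T,a) = {x ∈ [0,∞)^s : ∏ (x_j + a) ≤ T}`. -/
def hcP (s : ℕ) (T a : ℝ) : Set (Fin s → ℝ) :=
  {x | (∀ i, 0 ≤ x i) ∧ ∏ i, (x i + a) ≤ T}

/-- Closed form of `taylorF`. -/
noncomputable def Gfun (s : ℕ) (t : ℝ) : ℝ :=
  (-1 : ℝ) ^ s * (Real.exp (-t) - ∑ n ∈ Finset.range s, (-t) ^ n / (Nat.factorial n : ℝ))

lemma taylorF_eq_Gfun (s : ℕ) (t : ℝ) : taylorF s t = Gfun s t := by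
  unfold taylorF Gfun
  congr 1
  have hsum : Summable (fun n : ℕ => (-t) ^ n / (Nat.factorial n : ℝ)) :=
    Real.summable_pow_div_factorial (-t)
  have h := Summable.sum_add_tsum_nat_add s hsum
  have hexp : ∑' n : ℕ, (-t) ^ n / (Nat.factorial n : ℝ) = Real.exp (-t) := by
    rw [Real.exp_eq_exp_ℝ, NormedSpace.exp_eq_tsum_div]
  rw [hexp] at h
  linarith [h]

lemma Gfun_continuous (s : ℕ) : Continuous (Gfun s) := by
  unfold Gfun
  exact continuous_const.mul ((Real.continuous_exp.comp continuous_neg).sub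
    (continuous_finset_sum _ fun n _ => (continuous_neg.pow n).div_const _))

lemma Gfun_zero (s : ℕ) (hs : 1 ≤ s) : Gfun s 0 = 0 := by
  match s, hs with
  | (m + 1), _ =>
    unfold Gfun
    rw [Finset.sum_range_succ']
    simp

lemma Gfun_hasDerivAt (s : ℕ) (t : ℝ) : HasDerivAt (Gfun (s + 1)) (Gfun s t) t := by
  have hexp : HasDerivAt (fun t : ℝ => Real.exp (-t)) (-Real.exp (-t)) t := by
    exact ((Real.hasDerivAt_exp (-t)).comp t (hasDerivAt_neg t)).congr_deriv (by ring)
  have hterm : ∀ n : ℕ, HasDerivAt (fun t : ℝ => (-t) ^ n / (Nat.factorial n : ℝ))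
      ((↑n * (-t) ^ (n - 1) * (-1)) / (Nat.factorial n : ℝ)) t := fun n => by
    simpa using ((hasDerivAt_pow n (-t)).comp t (hasDerivAt_neg t)).div_const
      (Nat.factorial n : ℝ)
  have hsum : HasDerivAt (fun t : ℝ => ∑ n ∈ Finset.range (s + 1),
      (-t) ^ n / (Nat.factorial n : ℝ))
      (∑ n ∈ Finset.range (s + 1), (↑n * (-t) ^ (n - 1) * (-1)) / (Nat.factorial n : ℝ)) t :=
    HasDerivAt.fun_sum fun n _ => hterm n
  have h := (hexp.sub hsum).const_mul ((-1 : ℝ) ^ (s + 1))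
  have hval : ∑ n ∈ Finset.range (s + 1), (↑n * (-t) ^ (n - 1) * (-1)) / (Nat.factorial n : ℝ)
      = -∑ n ∈ Finset.range s, (-t) ^ n / (Nat.factorial n : ℝ) := by
    rw [Finset.sum_range_succ', ← Finset.sum_neg_distrib]
    simp only [Nat.cast_zero, zero_mul, zero_div, add_zero, Nat.add_sub_cancel]
    apply Finset.sum_congr rfl
    intro k _
    have hfac : ((Nat.factorial (k + 1) : ℝ)) = (k + 1) * (Nat.factorial k : ℝ) := by
      rw [Nat.factorial_succ]; push_cast; ring
    have hfk : (Nat.factorial k : ℝ) ≠ 0 := Nat.cast_ne_zero.2 (Nat.factorial_ne_zero k)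
    rw [hfac]
    field_simp
    push_cast
    ring
  rw [hval] at h
  refine h.congr_deriv ?_
  unfold Gfun
  rw [pow_succ]
  ring

lemma Gfun_nonneg : ∀ s : ℕ, ∀ t : ℝ, 0 ≤ t → 0 ≤ Gfun s t := by
  intro s
  induction s with
  | zero =>
    intro t _
    simp only [Gfun, pow_zero, Finset.range_zero, Finset.sum_empty, sub_zero, one_mul]
    positivity
  | succ s ih =>
    intro t ht
    have hInt : Gfun (s + 1) t - Gfun (s + 1) 0 = ∫ u in (0 : ℝ)..t, Gfun s u :=
      (intervalIntegral.integral_eq_sub_of_hasDerivAt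
        (fun x _ => Gfun_hasDerivAt s x)
        ((Gfun_continuous s).intervalIntegrable 0 t)).symm
    rw [Gfun_zero (s + 1) (Nat.le_add_left 1 s), sub_zero] at hInt
    rw [hInt]
    exact intervalIntegral.integral_nonneg ht fun u hu => ih u hu.1

/-- Target value of the volume. -/
noncomputable def Jfun (s : ℕ) (T a : ℝ) : ℝ :=
  if a ^ s < T then T * Gfun s (Real.log T - s * Real.log a) else 0

lemma Jfun_nonneg (s : ℕ) (T a : ℝ) (ha : 0 < a) : 0 ≤ Jfun s T a := by
  unfold Jfun
  split_ifs with h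
  · have hT : 0 < T := (pow_pos ha s).trans h
    have harg : 0 ≤ Real.log T - s * Real.log a := by
      have := Real.log_le_log (pow_pos ha s) h.le
      rw [Real.log_pow] at this
      linarith
    exact mul_nonneg hT.le (Gfun_nonneg s _ harg)
  · exact le_refl 0

lemma measurableSet_hcP (s : ℕ) (T a : ℝ) : MeasurableSet (hcP s T a) := by
  have h1 : MeasurableSet {x : Fin s → ℝ | ∀ i, 0 ≤ x i} := by
    rw [Set.setOf_forall]
    exact MeasurableSet.iInter fun i =>
      measurableSet_le measurable_const (measurable_pi_apply i)
  have h2 : MeasurableSet {x : Fin s → ℝ | ∏ i, (x i + a) ≤ T} := by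
    apply measurableSet_le _ measurable_const
    exact Finset.measurable_prod _ fun i _ => by fun_prop
  exact h1.inter h2

lemma volume_hcP_aux (a : ℝ) (ha : 0 < a) :
    ∀ s : ℕ, 1 ≤ s → ∀ T : ℝ, 0 < T →
      volume (hcP s T a) = ENNReal.ofReal (Jfun s T a) := by
  intro s hs
  induction s, hs using Nat.le_induction with
  | base =>
    intro T hT
    have he : hcP 1 T a = (MeasurableEquiv.funUnique (Fin 1) ℝ) ⁻¹' (Set.Icc 0 (T - a)) := by
      ext x
      simp only [hcP, Set.mem_setOf_eq, Set.mem_preimage, MeasurableEquiv.funUnique_apply,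
        Set.mem_Icc, Fin.prod_univ_one, Fin.forall_fin_one, Fin.default_eq_zero]
      constructor
      · rintro ⟨h1, h2⟩; exact ⟨h1, by linarith⟩
      · rintro ⟨h1, h2⟩; exact ⟨h1, by linarith⟩
    rw [he]
    refine ((volume_preserving_funUnique (Fin 1) ℝ).measure_preimage_equiv
      (Set.Icc 0 (T - a))).trans ?_
    rw [Real.volume_Icc, sub_zero]
    rw [Jfun, pow_one, Nat.cast_one]
    split_ifs with h
    · congr 1
      have hexp : Real.exp (-(Real.log T - 1 * Real.log a)) = a / T := by
        rw [show -(Real.log T - 1 * Real.log a) = Real.log (a / T) by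
          rw [Real.log_div ha.ne' hT.ne']; ring]
        exact Real.exp_log (by positivity)
      rw [Gfun, hexp]
      rw [Finset.sum_range_one]
      field_simp
      ring
    · rw [ENNReal.ofReal_eq_zero.2 (by linarith : T - a ≤ 0), ENNReal.ofReal_zero]
  | succ s hs ih =>
    intro T hT
    have hTm := measurableSet_hcP (s + 1) T a
    set e := MeasurableEquiv.piFinSuccAbove (fun _ : Fin (s + 1) => ℝ) 0 with he
    have hmp := (volume_preserving_piFinSuccAbove (fun _ : Fin (s + 1) => ℝ) 0).symm
    have hv : volume (hcP (s + 1) T a)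
        = (volume : Measure (ℝ × (Fin s → ℝ))) (e.symm ⁻¹' hcP (s + 1) T a) :=
      (hmp.measure_preimage_equiv _).symm
    have hxa : ∀ x : ℝ, 0 ≤ x → 0 < x + a := fun x hx => by linarith
    have hmem : ∀ (x : ℝ) (y : Fin s → ℝ),
        e.symm (x, y) ∈ hcP (s + 1) T a
          ↔ (0 ≤ x ∧ ∀ i, 0 ≤ y i) ∧ (x + a) * ∏ i, (y i + a) ≤ T := by
      intro x y
      have hc : e.symm (x, y) = Fin.cons x y := by
        simp [he, MeasurableEquiv.piFinSuccAbove, Fin.insertNthEquiv, Fin.insertNth_zero']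
      rw [hc]
      simp [hcP, Fin.forall_fin_succ, Fin.prod_univ_succ]
    set g : ℝ → ℝ := fun x => if 0 ≤ x then Jfun s (T / (x + a)) a else 0 with hg
    have hpt : ∀ x : ℝ, volume (Prod.mk x ⁻¹' (e.symm ⁻¹' hcP (s + 1) T a))
        = ENNReal.ofReal (g x) := by
      intro x
      by_cases hx : 0 ≤ x
      · have hset : Prod.mk x ⁻¹' (e.symm ⁻¹' hcP (s + 1) T a) = hcP s (T / (x + a)) a := by
          ext y
          rw [Set.mem_preimage, Set.mem_preimage]
          show e.symm (x, y) ∈ hcP (s + 1) T a ↔ _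
          rw [hmem x y]
          simp only [hcP, Set.mem_setOf_eq]
          constructor
          · rintro ⟨⟨_, h1⟩, h2⟩
            refine ⟨h1, (le_div_iff₀ (hxa x hx)).2 ?_⟩
            rw [mul_comm]; exact h2
          · rintro ⟨h1, h2⟩
            refine ⟨⟨hx, h1⟩, ?_⟩
            rw [mul_comm]; exact (le_div_iff₀ (hxa x hx)).1 h2
        rw [hset, ih _ (div_pos hT (hxa x hx)), hg]
        simp only [if_pos hx]
      · have hset : Prod.mk x ⁻¹' (e.symm ⁻¹' hcP (s + 1) T a) = ∅ := by
          ext y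
          rw [Set.mem_preimage, Set.mem_preimage]
          show e.symm (x, y) ∈ hcP (s + 1) T a ↔ _
          rw [hmem x y]
          simp only [Set.mem_empty_iff_false, iff_false]
          rintro ⟨⟨h1, _⟩, _⟩
          exact hx h1
        rw [hset, hg]
        simp [hx]
    rw [hv, Measure.volume_eq_prod, Measure.prod_apply (e.symm.measurable hTm)]
    rw [lintegral_congr hpt]
    by_cases hcase : a ^ (s + 1) < T
    · -- main case
      set c : ℝ := T / a ^ s - a with hcdef
      have hca : c + a = T / a ^ s := by rw [hcdef]; ring
      have hc0 : 0 < c := by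
        rw [hcdef, sub_pos, lt_div_iff₀ (pow_pos ha s)]
        calc a * a ^ s = a ^ (s + 1) := by ring
          _ < T := hcase
      have hTca : T / (c + a) = a ^ s := by
        rw [hca]
        field_simp
      set φ : ℝ → ℝ := fun x => Real.log T - Real.log (x + a) - s * Real.log a with hφ
      set h : ℝ → ℝ := fun x => T / (x + a) * Gfun s (φ x) with hh
      have hφc : φ c = 0 := by
        rw [hφ]
        show Real.log T - Real.log (c + a) - s * Real.log a = 0
        rw [hca, Real.log_div hT.ne' (pow_pos ha s).ne', Real.log_pow]
        ring
      have hgind : g = Set.indicator (Set.Icc 0 c) h := by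
        funext x
        by_cases hx : 0 ≤ x
        · rcases lt_trichotomy x c with hlt | rfl | hgt
          · have hmem' : x ∈ Set.Icc 0 c := ⟨hx, hlt.le⟩
            rw [Set.indicator_of_mem hmem', hg]
            simp only [if_pos hx]
            have hbig : a ^ s < T / (x + a) := by
              rw [lt_div_iff₀ (hxa x hx)]
              calc a ^ s * (x + a) < a ^ s * (c + a) :=
                    mul_lt_mul_of_pos_left (by linarith) (pow_pos ha s)
                _ = T := by rw [hca]; field_simp
            rw [Jfun, if_pos hbig, hh]
            show T / (x + a) * Gfun s (Real.log (T / (x + a)) - s * Real.log a)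
              = T / (x + a) * Gfun s (φ x)
            rw [hφ]
            show _ = T / (x + a) * Gfun s (Real.log T - Real.log (x + a) - s * Real.log a)
            rw [Real.log_div hT.ne' (hxa x hx).ne']
          · have hmem' : c ∈ Set.Icc 0 c := ⟨hx, le_refl c⟩
            rw [Set.indicator_of_mem hmem', hg]
            simp only [if_pos hx]
            rw [Jfun, if_neg (by rw [hTca]; exact lt_irrefl _)]
            show 0 = T / (c + a) * Gfun s (φ c)
            rw [hφc, Gfun_zero s hs, mul_zero]
          · have hmem' : x ∉ Set.Icc 0 c := fun hm => absurd hm.2 (not_le.2 hgt)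
            rw [Set.indicator_of_notMem hmem', hg]
            simp only [if_pos hx]
            rw [Jfun, if_neg]
            push_neg
            calc T / (x + a) ≤ T / (c + a) :=
                  div_le_div_of_nonneg_left hT.le (by linarith) (by linarith)
              _ = a ^ s := hTca
        · have hmem' : x ∉ Set.Icc 0 c := fun hm => hx hm.1
          rw [Set.indicator_of_notMem hmem', hg]
          simp only [if_neg hx]
      have hconth : ContinuousOn h (Set.Icc 0 c) := by
        intro x hx'
        have hxa0 : 0 < x + a := by have := hx'.1; linarith
        apply ContinuousAt.continuousWithinAt
        have h1 : ContinuousAt (fun x : ℝ => x + a) x := by fun_prop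
        have h2 : ContinuousAt (fun x : ℝ => Real.log (x + a)) x :=
          ContinuousAt.comp (g := Real.log) (f := fun x : ℝ => x + a)
            (Real.continuousAt_log hxa0.ne') h1
        exact (continuousAt_const.div h1 hxa0.ne').mul
          ((Gfun_continuous s).continuousAt.comp
            ((continuousAt_const.sub h2).sub continuousAt_const))
      have hint : Integrable g := by
        rw [hgind]
        exact (hconth.integrableOn_Icc).integrable_indicator measurableSet_Icc
      have hlin : ∫⁻ x, ENNReal.ofReal (g x) = ENNReal.ofReal (∫ x, g x) :=
        (ofReal_integral_eq_lintegral_ofReal hint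
          (Filter.Eventually.of_forall fun x => by
            rw [hg]
            show 0 ≤ if 0 ≤ x then Jfun s (T / (x + a)) a else 0
            split_ifs with hx
            · exact Jfun_nonneg _ _ _ ha
            · exact le_refl 0)).symm
      rw [hlin]
      congr 1
      rw [hgind, MeasureTheory.integral_indicator measurableSet_Icc,
        MeasureTheory.integral_Icc_eq_integral_Ioc, ← intervalIntegral.integral_of_le hc0.le]
      have hderiv : ∀ x ∈ Set.uIcc (0 : ℝ) c,
          HasDerivAt (fun x => -T * Gfun (s + 1) (φ x)) (h x) x := by
        intro x hx'
        rw [Set.uIcc_of_le hc0.le] at hx'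
        have hxa0 : 0 < x + a := by have := hx'.1; linarith
        have hlog : HasDerivAt (fun x : ℝ => Real.log (x + a)) ((x + a)⁻¹) x := by
          refine ((Real.hasDerivAt_log hxa0.ne').comp x ((hasDerivAt_id x).add_const a)).congr_deriv ?_
          ring
        have hφd : HasDerivAt φ (-(x + a)⁻¹) x := by
          rw [hφ]
          simpa using ((hasDerivAt_const x (Real.log T)).sub hlog).sub_const
            ((s : ℝ) * Real.log a)
        have hd := ((Gfun_hasDerivAt s (φ x)).comp x hφd).const_mul (-T)
        refine hd.congr_deriv ?_
        rw [hh]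
        symm
        show T / (x + a) * Gfun s (φ x) = _
        field_simp
      have hii : IntervalIntegrable h volume 0 c := by
        apply ContinuousOn.intervalIntegrable
        rwa [Set.uIcc_of_le hc0.le]
      rw [intervalIntegral.integral_eq_sub_of_hasDerivAt hderiv hii]
      have hφ0 : φ 0 = Real.log T - (↑(s + 1) : ℝ) * Real.log a := by
        rw [hφ]
        show Real.log T - Real.log (0 + a) - s * Real.log a = _
        rw [zero_add]
        push_cast
        ring
      rw [hφc, Gfun_zero (s + 1) (by omega), hφ0, Jfun, if_pos hcase]
      ring
    · -- degenerate case : T ≤ a^(s+1)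
      have hg0 : ∀ x : ℝ, g x = 0 := by
        intro x
        rw [hg]
        show (if 0 ≤ x then Jfun s (T / (x + a)) a else 0) = 0
        split_ifs with hx
        · rw [Jfun, if_neg]
          push_neg
          rw [div_le_iff₀ (hxa x hx)]
          calc T ≤ a ^ (s + 1) := not_lt.1 hcase
            _ = a ^ s * a := pow_succ a s
            _ ≤ a ^ s * (x + a) := by nlinarith [pow_pos ha s]
        · rfl
      simp only [hg0, ENNReal.ofReal_zero, lintegral_zero]
      rw [Jfun, if_neg hcase, ENNReal.ofReal_zero]

/-- the volume `I(s,T,a)` of `P(s,T,a)` is `0` if `T ≤ a^s`, and equals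
`T · F_s(ln T − s ln a)` if `T > a^s`. -/
theorem volume_hcP_formula (s : ℕ) (hs : 1 ≤ s) (T a : ℝ) (hT : 0 < T) (ha : 0 < a) :
    (T ≤ a ^ s → (volume (hcP s T a)).toReal = 0) ∧
    (a ^ s < T →
      (volume (hcP s T a)).toReal = T * taylorF s (Real.log T - s * Real.log a)) := by
  have key := volume_hcP_aux a ha s hs T hT
  constructor
  · intro h
    rw [key]
    rw [Jfun, if_neg (not_lt.2 h)]
    simp
  · intro h
    rw [key, Jfun, if_pos h, taylorF_eq_Gfun]
    apply ENNReal.toReal_ofReal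
    have harg : 0 ≤ Real.log T - s * Real.log a := by
      have := Real.log_le_log (pow_pos ha s) h.le
      rw [Real.log_pow] at this
      linarith
    exact mul_nonneg hT.le (Gfun_nonneg s _ harg)
end

section
/- For every s ∈ ℕ, a > 0, 0 < δ ≤ 1 with δ < a, and T > 0, the cardinality of the corner hyperbolic cross satisfies |Γ(s,T,a)| < δ^{-1} · T^{1 + 1/δ} · (a − δ)^{-s/δ}, where Γ(s,T,a) := {k ∈ ℕ₀^s : ∏_{i=1}^s (k_i + a) ≤ T}. -/
open Real Finset

/-- The corner hyperbolic cross `Γ(s,T,a) = {k ∈ ℕ₀^s : ∏ (k_i + a) ≤ T}`. -/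
def hcGamma (s : ℕ) (T a : ℝ) : Set (Fin s → ℕ) :=
  {k | ∏ i, ((k i : ℝ) + a) ≤ T}

lemma hc_prod_ge (s : ℕ) (a : ℝ) (ha : 0 < a) (k : Fin s → ℕ) :
    a ^ s ≤ ∏ i, ((k i : ℝ) + a) := by
  calc a ^ s = ∏ _i : Fin s, a := by
        rw [Finset.prod_const, Finset.card_univ, Fintype.card_fin]
    _ ≤ ∏ i, ((k i : ℝ) + a) := by
        apply Finset.prod_le_prod (fun i _ => ha.le)
        intro i _
        have : (0:ℝ) ≤ (k i : ℝ) := Nat.cast_nonneg _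
        linarith

lemma hc_finite (s : ℕ) (T a : ℝ) (ha : 0 < a) : (hcGamma s T a).Finite := by
  apply Set.Finite.subset
    (Set.Finite.pi (fun _ : Fin s => Set.finite_Iic (⌊T / a ^ (s-1)⌋₊)))
  intro k hk
  simp only [Set.mem_pi, Set.mem_univ, Set.mem_Iic, forall_true_left]
  intro i
  have hk' : ∏ j, ((k j : ℝ) + a) ≤ T := hk
  have hpos : (0:ℝ) < a ^ (s-1) := by positivity
  have h1 : a ^ (s-1) ≤ ∏ j ∈ Finset.univ.erase i, ((k j : ℝ) + a) := by
    calc a ^ (s-1) = ∏ _j ∈ Finset.univ.erase i, a := by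
          rw [Finset.prod_const, Finset.card_erase_of_mem (Finset.mem_univ i),
            Finset.card_univ, Fintype.card_fin]
      _ ≤ _ := by
          apply Finset.prod_le_prod (fun j _ => ha.le)
          intro j _
          have : (0:ℝ) ≤ (k j : ℝ) := Nat.cast_nonneg _
          linarith
  have h2 : ((k i : ℝ) + a) * a ^ (s-1) ≤ T := by
    calc ((k i : ℝ) + a) * a ^ (s-1)
        ≤ ((k i : ℝ) + a) * ∏ j ∈ Finset.univ.erase i, ((k j : ℝ) + a) := by
          apply mul_le_mul_of_nonneg_left h1
          have : (0:ℝ) ≤ (k i : ℝ) := Nat.cast_nonneg _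
          linarith
      _ = ∏ j, ((k j : ℝ) + a) := Finset.mul_prod_erase Finset.univ (fun j => ((k j : ℝ) + a)) (Finset.mem_univ i)
      _ ≤ T := hk'
  apply Nat.le_floor
  rw [le_div_iff₀ hpos]
  nlinarith [Nat.cast_nonneg (α := ℝ) (k i)]

lemma hc_step (δ x : ℝ) (hδ0 : 0 < δ) (hδ1 : δ ≤ 1) (hδx : δ < x) :
    x ^ (-(1 + 1/δ)) ≤ (x - δ) ^ (-(1/δ)) - x ^ (-(1/δ)) := by
  have hx : 0 < x := hδ0.trans hδx
  have hl : 1 ≤ 1/δ := by rw [le_div_iff₀ hδ0]; linarith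
  have ht0 : 0 < δ / x := by positivity
  have ht1 : δ / x < 1 := (div_lt_one hx).2 hδx
  have hber : 1 + (1/δ) * (δ/x) ≤ (1 + δ/x) ^ (1/δ) :=
    one_add_mul_self_le_rpow_one_add (by linarith) hl
  have h2 : (1 + δ/x) ≤ (1 - δ/x)⁻¹ := by
    rw [inv_eq_one_div, le_div_iff₀ (by linarith : (0:ℝ) < 1 - δ/x)]
    nlinarith
  have h4 : (1 + δ/x) ^ (1/δ) ≤ ((1 - δ/x)⁻¹) ^ (1/δ) :=
    rpow_le_rpow (by positivity) h2 (by linarith)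
  have h5 : ((1 - δ/x)⁻¹) ^ (1/δ) = (1 - δ/x) ^ (-(1/δ)) := by
    rw [inv_rpow (by linarith), ← rpow_neg (by linarith)]
  have hmul : (x - δ) ^ (-(1/δ)) = x ^ (-(1/δ)) * (1 - δ/x) ^ (-(1/δ)) := by
    rw [← mul_rpow hx.le (by linarith)]
    congr 1
    field_simp
  have hxl : 0 < x ^ (-(1/δ)) := rpow_pos_of_pos hx _
  have h6 : x ^ (-(1/δ)) * (1 + (1/δ) * (δ/x)) ≤ (x - δ) ^ (-(1/δ)) := by
    rw [hmul]
    apply mul_le_mul_of_nonneg_left _ hxl.le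
    calc 1 + (1/δ) * (δ/x) ≤ (1 + δ/x) ^ (1/δ) := hber
      _ ≤ _ := h5 ▸ h4
  have hld : (1/δ) * (δ/x) = 1/x := by field_simp
  have h7 : x ^ (-(1 + 1/δ)) = x ^ (-(1/δ)) * (1/x) := by
    rw [show -(1 + 1/δ) = -(1/δ) + (-1) by ring, rpow_add hx, rpow_neg_one, one_div x]
  rw [h7]
  rw [hld] at h6
  nlinarith [hxl]

lemma hc_key_sum (a δ : ℝ) (hδ0 : 0 < δ) (hδ1 : δ ≤ 1) (hδa : δ < a) (M : ℕ) :
    ∑ n ∈ Finset.range M, ((n:ℝ) + a) ^ (-(1 + 1/δ)) ≤ (a - δ) ^ (-(1/δ)) := by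
  have hb : 0 < a - δ := by linarith
  set w : ℕ → ℝ := fun n => ((n:ℝ) + (a - δ)) ^ (-(1/δ)) with hw
  have hterm : ∀ n ∈ Finset.range M, ((n:ℝ)+a) ^ (-(1 + 1/δ)) ≤ w n - w (n+1) := by
    intro n _
    have hn : (0:ℝ) ≤ (n:ℝ) := Nat.cast_nonneg _
    have h1 := hc_step δ ((n:ℝ)+a) hδ0 hδ1 (by linarith)
    have e1 : ((n:ℝ)+a) - δ = (n:ℝ) + (a - δ) := by ring
    rw [e1] at h1
    have h2 : w (n+1) ≤ ((n:ℝ)+a) ^ (-(1/δ)) := by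
      have hbase : (0:ℝ) < (n:ℝ) + a := by linarith
      have hle : ((n:ℝ)+a) ≤ ((n+1:ℕ):ℝ) + (a - δ) := by
        push_cast; linarith
      simp only [hw]
      rw [rpow_neg hbase.le, rpow_neg (by push_cast; linarith)]
      exact inv_anti₀ (rpow_pos_of_pos hbase _) (rpow_le_rpow hbase.le hle (by positivity))
    have : w n = ((n:ℝ) + (a - δ)) ^ (-(1/δ)) := rfl
    linarith
  calc ∑ n ∈ Finset.range M, ((n:ℝ) + a) ^ (-(1 + 1/δ))
      ≤ ∑ n ∈ Finset.range M, (w n - w (n+1)) := Finset.sum_le_sum hterm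
    _ = w 0 - w M := Finset.sum_range_sub' w M
    _ ≤ w 0 := by
        have : 0 ≤ w M := rpow_nonneg (by positivity) _
        linarith
    _ = (a - δ) ^ (-(1/δ)) := by simp [hw]

/-- for `s ∈ ℕ`, `a > 0`, `0 < δ ≤ 1` with `δ < a`, and `T > 0`,
`|Γ(s,T,a)| < δ⁻¹ · T^(1 + 1/δ) · (a − δ)^(−s/δ)`. -/
theorem hcGamma_card_explicit (s : ℕ) (hs : 1 ≤ s) (a δ T : ℝ) (ha : 0 < a)
    (hδ0 : 0 < δ) (hδ1 : δ ≤ 1) (hδa : δ < a) (hT : 0 < T) :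
    ((hcGamma s T a).ncard : ℝ) <
      δ⁻¹ * T ^ (1 + 1 / δ) * (a - δ) ^ (-(s : ℝ) / δ) := by
  have hb : 0 < a - δ := by linarith
  induction s, hs using Nat.le_induction generalizing T with
  | base =>
    -- s = 1
    by_cases haT : a ≤ T
    · -- ncard ≤ ⌊T - a⌋₊ + 1
      have hsub : hcGamma 1 T a ⊆ (fun (n:ℕ) => (fun _ : Fin 1 => n)) '' (Set.Iic ⌊T - a⌋₊) := by
        intro k hk
        have hk' : (k 0 : ℝ) + a ≤ T := by
          have := hk
          simpa [hcGamma, Fin.prod_univ_one] using this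
        refine ⟨k 0, ?_, ?_⟩
        · exact Nat.le_floor (by linarith)
        · funext i
          have : i = 0 := Subsingleton.elim i 0
          rw [this]
      have hcard : (hcGamma 1 T a).ncard ≤ ⌊T - a⌋₊ + 1 := by
        have hfin : ((fun (n:ℕ) => (fun _ : Fin 1 => n)) '' (Set.Iic ⌊T - a⌋₊)).Finite :=
          (Set.finite_Iic _).image _
        calc (hcGamma 1 T a).ncard ≤ _ := Set.ncard_le_ncard hsub hfin
          _ ≤ (Set.Iic ⌊T - a⌋₊).ncard := Set.ncard_image_le (Set.finite_Iic _)
          _ = ⌊T - a⌋₊ + 1 := by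
              rw [← Finset.coe_Iic, Set.ncard_coe_finset, Nat.card_Iic]
      have h1 : ((hcGamma 1 T a).ncard : ℝ) ≤ (T - a) + 1 := by
        calc ((hcGamma 1 T a).ncard : ℝ) ≤ ((⌊T - a⌋₊ : ℝ) + 1) := by
              exact_mod_cast hcard
          _ ≤ (T - a) + 1 := by
              have := Nat.floor_le (by linarith : (0:ℝ) ≤ T - a)
              linarith
      have h2 : (T - a) + 1 < δ⁻¹ * T := by
        rw [inv_eq_one_div, div_mul_eq_mul_div, lt_div_iff₀ hδ0]
        nlinarith [mul_nonneg (sub_nonneg.2 hδ1) (sub_nonneg.2 haT)]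
      have h3 : δ⁻¹ * T ≤ δ⁻¹ * T ^ (1 + 1/δ) * (a - δ) ^ (-(1:ℝ)/δ) := by
        have e1 : T ^ (1 + 1/δ) = T * T ^ (1/δ) := by
          rw [rpow_add hT, rpow_one]
        have e2 : (a - δ) ^ (-(1:ℝ)/δ) = ((a - δ) ^ (1/δ))⁻¹ := by
          rw [show -(1:ℝ)/δ = -(1/δ) by ring, rpow_neg hb.le]
        have h4 : (a - δ) ^ (1/δ) ≤ T ^ (1/δ) :=
          rpow_le_rpow hb.le (by linarith) (by positivity)
        have h5 : (1:ℝ) ≤ T ^ (1/δ) * ((a - δ) ^ (1/δ))⁻¹ := by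
          rw [← div_eq_mul_inv, le_div_iff₀ (rpow_pos_of_pos hb _)]
          linarith
        calc δ⁻¹ * T = δ⁻¹ * T * 1 := by ring
          _ ≤ δ⁻¹ * T * (T ^ (1/δ) * ((a - δ) ^ (1/δ))⁻¹) := by
              apply mul_le_mul_of_nonneg_left h5
              positivity
          _ = δ⁻¹ * T ^ (1 + 1/δ) * (a - δ) ^ (-(1:ℝ)/δ) := by
              rw [e1, e2]; ring
      calc ((hcGamma 1 T a).ncard : ℝ) ≤ (T - a) + 1 := h1
        _ < δ⁻¹ * T := h2
        _ ≤ _ := by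
            convert h3 using 3
            norm_num
    · -- T < a : Γ empty
      push_neg at haT
      have hempty : hcGamma 1 T a = ∅ := by
        ext k
        simp only [hcGamma, Set.mem_setOf_eq, Set.mem_empty_iff_false, iff_false, not_le,
          Fin.prod_univ_one]
        have : (0:ℝ) ≤ (k 0 : ℝ) := Nat.cast_nonneg _
        linarith
      rw [hempty]
      simp only [Set.ncard_empty, Nat.cast_zero]
      have : (0:ℝ) < (a - δ) ^ (-(1:ℝ)/δ) := rpow_pos_of_pos hb _
      have h2 : (0:ℝ) < T ^ (1 + 1/δ) := rpow_pos_of_pos hT _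
      positivity
  | succ s hs1 IH =>
    set M := ⌊T / a ^ s⌋₊ + 1 with hM
    -- the tail map
    set Φ : (Fin (s+1) → ℕ) → ℕ × (Fin s → ℕ) := fun k => (k 0, Fin.tail k) with hΦ
    have hΦinj : Function.Injective Φ := by
      intro k₁ k₂ h
      have h1 : k₁ 0 = k₂ 0 := congrArg Prod.fst h
      have h2 : Fin.tail k₁ = Fin.tail k₂ := congrArg Prod.snd h
      rw [← Fin.cons_self_tail k₁, ← Fin.cons_self_tail k₂, h1, h2]
    -- Finsets
    have hGfin : ∀ n : ℕ, (hcGamma s (T / ((n:ℝ) + a)) a).Finite := fun n =>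
      hc_finite s _ a ha
    classical
    set SF : Finset (ℕ × (Fin s → ℕ)) :=
      (Finset.range M).biUnion (fun n => {n} ×ˢ (hGfin n).toFinset) with hSF
    have himg : Φ '' (hcGamma (s+1) T a) ⊆ ↑SF := by
      rintro _ ⟨k, hk, rfl⟩
      have hk' : ∏ i, ((k i : ℝ) + a) ≤ T := hk
      have hsplit : ((k 0 : ℝ) + a) * ∏ i : Fin s, ((Fin.tail k i : ℝ) + a) ≤ T := by
        rw [Fin.prod_univ_succ (fun i => ((k i : ℝ) + a))] at hk'
        exact hk'
      have hk0pos : (0:ℝ) < (k 0 : ℝ) + a := by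
        have : (0:ℝ) ≤ (k 0 : ℝ) := Nat.cast_nonneg _
        linarith
      have htail : Fin.tail k ∈ hcGamma s (T / ((k 0 : ℝ) + a)) a := by
        simp only [hcGamma, Set.mem_setOf_eq]
        rw [le_div_iff₀ hk0pos]
        linarith [hsplit]
      have hk0M : k 0 < M := by
        have hge : a ^ s ≤ ∏ i : Fin s, ((Fin.tail k i : ℝ) + a) := hc_prod_ge s a ha _
        have hT' : ((k 0 : ℝ) + a) * a ^ s ≤ T := by
          calc ((k 0 : ℝ) + a) * a ^ s ≤ ((k 0 : ℝ) + a) * ∏ i : Fin s, ((Fin.tail k i : ℝ) + a) :=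
                mul_le_mul_of_nonneg_left hge hk0pos.le
            _ ≤ T := hsplit
        have : (k 0 : ℝ) ≤ T / a ^ s := by
          rw [le_div_iff₀ (by positivity : (0:ℝ) < a ^ s)]
          nlinarith [pow_pos ha s]
        have := Nat.le_floor this
        omega
      show Φ k ∈ SF
      rw [hSF]
      apply Finset.mem_biUnion.2
      refine ⟨k 0, Finset.mem_range.2 hk0M, ?_⟩
      simp only [Finset.mem_product, Finset.mem_singleton, Set.Finite.mem_toFinset]
      exact ⟨rfl, htail⟩
    have hΓfin : (hcGamma (s+1) T a).Finite := hc_finite _ _ _ ha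
    have hcard1 : (hcGamma (s+1) T a).ncard ≤ SF.card := by
      calc (hcGamma (s+1) T a).ncard = (Φ '' (hcGamma (s+1) T a)).ncard :=
            (Set.ncard_image_of_injective _ hΦinj).symm
        _ ≤ (↑SF : Set (ℕ × (Fin s → ℕ))).ncard :=
            Set.ncard_le_ncard himg (SF.finite_toSet)
        _ = SF.card := Set.ncard_coe_finset _
    have hcard2 : SF.card ≤ ∑ n ∈ Finset.range M, (hcGamma s (T / ((n:ℝ) + a)) a).ncard := by
      calc SF.card ≤ ∑ n ∈ Finset.range M, ({n} ×ˢ (hGfin n).toFinset).card :=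
            Finset.card_biUnion_le
        _ = ∑ n ∈ Finset.range M, (hcGamma s (T / ((n:ℝ) + a)) a).ncard := by
            apply Finset.sum_congr rfl
            intro n _
            rw [Finset.card_product, Finset.card_singleton, one_mul,
              Set.ncard_eq_toFinset_card _ (hGfin n)]
    have hstrict : ∀ n ∈ Finset.range M,
        ((hcGamma s (T / ((n:ℝ) + a)) a).ncard : ℝ) <
          δ⁻¹ * (T / ((n:ℝ) + a)) ^ (1 + 1/δ) * (a - δ) ^ (-(s:ℝ)/δ) := by
      intro n _
      have hna : (0:ℝ) < (n:ℝ) + a := by positivity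
      exact IH (T / ((n:ℝ) + a)) (by positivity)
    have hsum : ((hcGamma (s+1) T a).ncard : ℝ) <
        ∑ n ∈ Finset.range M, δ⁻¹ * (T / ((n:ℝ) + a)) ^ (1 + 1/δ) * (a - δ) ^ (-(s:ℝ)/δ) := by
      have hle : ((hcGamma (s+1) T a).ncard : ℝ) ≤
          ∑ n ∈ Finset.range M, ((hcGamma s (T / ((n:ℝ) + a)) a).ncard : ℝ) := by
        push_cast
        exact_mod_cast le_trans (Nat.cast_le.2 (hcard1.trans hcard2)) (by push_cast; rfl)
      have hne : (Finset.range M).Nonempty := ⟨0, Finset.mem_range.2 (by omega)⟩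
      calc ((hcGamma (s+1) T a).ncard : ℝ)
          ≤ ∑ n ∈ Finset.range M, ((hcGamma s (T / ((n:ℝ) + a)) a).ncard : ℝ) := hle
        _ < _ := Finset.sum_lt_sum_of_nonempty hne hstrict
    -- now bound the sum
    have hsum2 : ∑ n ∈ Finset.range M, δ⁻¹ * (T / ((n:ℝ) + a)) ^ (1 + 1/δ) * (a - δ) ^ (-(s:ℝ)/δ)
        ≤ δ⁻¹ * T ^ (1 + 1/δ) * (a - δ) ^ (-((s:ℝ)+1)/δ) := by
      have hrw : ∀ n : ℕ, (T / ((n:ℝ) + a)) ^ (1 + 1/δ)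
          = T ^ (1 + 1/δ) * ((n:ℝ) + a) ^ (-(1 + 1/δ)) := by
        intro n
        have hna : (0:ℝ) < (n:ℝ) + a := by positivity
        rw [div_rpow hT.le hna.le, rpow_neg hna.le, div_eq_mul_inv]
      calc ∑ n ∈ Finset.range M, δ⁻¹ * (T / ((n:ℝ) + a)) ^ (1 + 1/δ) * (a - δ) ^ (-(s:ℝ)/δ)
          = δ⁻¹ * T ^ (1 + 1/δ) * (a - δ) ^ (-(s:ℝ)/δ) *
              ∑ n ∈ Finset.range M, ((n:ℝ) + a) ^ (-(1 + 1/δ)) := by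
            rw [Finset.mul_sum]
            apply Finset.sum_congr rfl
            intro n _
            rw [hrw n]; ring
        _ ≤ δ⁻¹ * T ^ (1 + 1/δ) * (a - δ) ^ (-(s:ℝ)/δ) * (a - δ) ^ (-(1/δ)) := by
            apply mul_le_mul_of_nonneg_left (hc_key_sum a δ hδ0 hδ1 hδa M)
            have h1 : (0:ℝ) < T ^ (1 + 1/δ) := rpow_pos_of_pos hT _
            have h2 : (0:ℝ) < (a - δ) ^ (-(s:ℝ)/δ) := rpow_pos_of_pos hb _
            positivity
        _ = δ⁻¹ * T ^ (1 + 1/δ) * (a - δ) ^ (-((s:ℝ)+1)/δ) := by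
            rw [mul_assoc, ← rpow_add hb]
            congr 2
            ring
    have : -(((s:ℕ)+1 : ℕ) : ℝ)/δ = -((s:ℝ)+1)/δ := by push_cast; ring
    rw [show (-((s+1:ℕ):ℝ)/δ) = -((s:ℝ)+1)/δ by push_cast; ring]
    linarith [hsum, hsum2]
end

section
/- For every s ∈ ℕ, a > 0, 0 < δ ≤ 1 with δ < a, and T > 0, the cardinality of the symmetric hyperbolic cross satisfies |Γ_±(s,T,a)| < 2δ^{-1} · T^{1 + 2/δ} · (a − δ)^{-2s/δ}, where Γ_±(s,T,a) := {k ∈ ℤ^s : ∏_{i=1}^s (|k_i| + a) ≤ T}. -/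
open Real Finset

theorem hc_lemA {μ b : ℝ} (hμ : 0 < μ) (hb : 0 < b) :
    (b+1) ^ (-(1+μ)) ≤ μ⁻¹ * (b ^ (-μ) - (b+1) ^ (-μ)) := by
  have hc : (0:ℝ) < b + 1 := by linarith
  have h1 : b / (b+1) ≤ Real.exp (-(1/(b+1))) := by
    have h := Real.add_one_le_exp (-(1/(b+1)))
    have hbb : b / (b+1) = 1 - 1/(b+1) := by field_simp; ring
    rw [hbb]; linarith
  have h2 : (b/(b+1)) ^ μ ≤ Real.exp (-(1/(b+1)) * μ) := by
    rw [Real.exp_mul]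
    exact Real.rpow_le_rpow (by positivity) h1 hμ.le
  have h3 : 1 + μ/(b+1) ≤ Real.exp (μ/(b+1)) := by
    have := Real.add_one_le_exp (μ/(b+1)); linarith
  have hB : (0:ℝ) < b ^ μ := Real.rpow_pos_of_pos hb μ
  have hC : (0:ℝ) < (b+1) ^ μ := Real.rpow_pos_of_pos hc μ
  have hkey : b ^ μ * (1 + μ/(b+1)) ≤ (b+1) ^ μ := by
    have hd : (b/(b+1)) ^ μ = b ^ μ / (b+1) ^ μ := Real.div_rpow hb.le hc.le μ
    have hexp : Real.exp (-(1/(b+1)) * μ) * Real.exp (μ/(b+1)) = 1 := by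
      rw [← Real.exp_add, Real.exp_eq_one_iff]; ring
    have h4 : b ^ μ / (b+1) ^ μ * (1 + μ/(b+1)) ≤
        Real.exp (-(1/(b+1)) * μ) * Real.exp (μ/(b+1)) := by
      rw [← hd]
      exact mul_le_mul h2 h3 (by positivity) (Real.exp_nonneg _)
    rw [hexp, div_mul_eq_mul_div, div_le_one hC] at h4
    linarith
  have key2 : μ * b ^ μ ≤ ((b+1) ^ μ - b ^ μ) * (b+1) := by
    have h5 : b ^ μ * (μ/(b+1)) * (b+1) ≤ ((b+1) ^ μ - b ^ μ) * (b+1) := by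
      have : b ^ μ * (μ/(b+1)) ≤ (b+1) ^ μ - b ^ μ := by linarith
      exact mul_le_mul_of_nonneg_right this hc.le
    calc μ * b ^ μ = b ^ μ * (μ/(b+1)) * (b+1) := by field_simp
      _ ≤ _ := h5
  rw [Real.rpow_neg hb.le, Real.rpow_neg hc.le, Real.rpow_neg hc.le]
  have hsplit : (b+1) ^ (1+μ) = (b+1) * (b+1) ^ μ := by
    rw [Real.rpow_add hc, Real.rpow_one]
  rw [hsplit]
  have hμ' : μ ≠ 0 := hμ.ne'
  have hB' : b ^ μ ≠ 0 := hB.ne'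
  have hC' : (b+1) ^ μ ≠ 0 := hC.ne'
  have e1 : μ⁻¹ * ((b ^ μ)⁻¹ - ((b+1) ^ μ)⁻¹)
      = ((b+1) ^ μ - b ^ μ)/(μ * b ^ μ * (b+1) ^ μ) := by
    rw [eq_div_iff (by positivity : (0:ℝ) < μ * b ^ μ * (b+1) ^ μ).ne']
    field_simp
  have e2 : ((b+1) * (b+1) ^ μ)⁻¹ = 1 / ((b+1) * (b+1) ^ μ) := inv_eq_one_div _
  rw [e1, e2, div_le_div_iff₀ (by positivity) (by positivity)]
  nlinarith [mul_le_mul_of_nonneg_right key2 hC.le]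

theorem hc_lemC {μ a : ℝ} (hμ : 0 < μ) (ha : 0 < a) (M : ℕ) :
    ∑ n ∈ Finset.Icc (-(M:ℤ)) (M:ℤ), ((|n| : ℝ) + a) ^ (-(1+μ)) ≤
      a ^ (-(1+μ)) + 2 * μ⁻¹ * (a ^ (-μ) - ((M:ℝ) + a) ^ (-μ)) := by
  induction M with
  | zero => simp
  | succ M ih =>
    have hM1 : ((M:ℤ)+1) ∉ Finset.Icc (-(M:ℤ)) (M:ℤ) := by
      simp [Finset.mem_Icc]
    have hM2 : (-((M:ℤ)+1)) ∉ insert ((M:ℤ)+1) (Finset.Icc (-(M:ℤ)) (M:ℤ)) := by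
      simp [Finset.mem_Icc]; omega
    have hset : Finset.Icc (-((M:ℕ)+1:ℤ)) (((M:ℕ)+1:ℤ)) =
        insert (-((M:ℤ)+1)) (insert ((M:ℤ)+1) (Finset.Icc (-(M:ℤ)) (M:ℤ))) := by
      ext n
      simp [Finset.mem_Icc]
      omega
    push_cast
    rw [hset, Finset.sum_insert hM2, Finset.sum_insert hM1]
    push_cast
    simp only [abs_neg]
    rw [abs_of_nonneg (by positivity : (0:ℝ) ≤ (M:ℝ)+1)]
    have hb : (0:ℝ) < (M:ℝ) + a := by positivity
    have htel := hc_lemA hμ hb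
    have e : (M:ℝ) + 1 + a = ((M:ℝ) + a) + 1 := by ring
    rw [e]
    have hμi : (0:ℝ) < μ⁻¹ := by positivity
    nlinarith [htel, ih]

theorem hc_lemD {a δ : ℝ} (ha : 0 < a) (hδ0 : 0 < δ) (hδ1 : δ ≤ 1) (hδa : δ < a) :
    a ^ (-(1+2/δ)) + 2 * (2/δ)⁻¹ * a ^ (-(2/δ)) ≤ (a-δ) ^ (-(2/δ)) := by
  set μ : ℝ := 2/δ with hμdef
  have haδ : (0:ℝ) < a - δ := by linarith
  have hμ1 : (1:ℝ) ≤ μ := by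
    rw [hμdef, le_div_iff₀ hδ0]; linarith
  have hA : (0:ℝ) < a ^ μ := Real.rpow_pos_of_pos ha μ
  have hE : (0:ℝ) < (a-δ) ^ μ := Real.rpow_pos_of_pos haδ μ
  have hber := one_add_mul_self_le_rpow_one_add
    (show (-1:ℝ) ≤ δ/(a-δ) by have h := div_nonneg hδ0.le haδ.le; linarith) hμ1
  have e1 : 1 + δ/(a-δ) = a/(a-δ) := by field_simp; ring
  have e2 : μ * (δ/(a-δ)) = 2/(a-δ) := by
    rw [hμdef]; field_simp
  have e3 : (a/(a-δ)) ^ μ = a ^ μ / (a-δ) ^ μ := Real.div_rpow ha.le haδ.le μ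
  rw [e1, e2, e3] at hber
  have h4 : a⁻¹ + δ ≤ 1 + 2/(a-δ) := by
    have : a⁻¹ ≤ 2/(a-δ) := by
      rw [inv_eq_one_div, div_le_div_iff₀ ha haδ]; linarith
    linarith
  have h5 : (a⁻¹ + δ) * (a ^ μ)⁻¹ ≤ ((a-δ) ^ μ)⁻¹ := by
    have h' : (a⁻¹ + δ) * (a-δ) ^ μ ≤ a ^ μ := by
      rw [← le_div_iff₀ hE]; linarith
    have h'' := mul_le_mul_of_nonneg_right h'
      (le_of_lt (mul_pos (inv_pos.2 hA) (inv_pos.2 hE)))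
    have c1 : a ^ μ * (a ^ μ)⁻¹ = 1 := mul_inv_cancel₀ hA.ne'
    have c2 : (a-δ) ^ μ * ((a-δ) ^ μ)⁻¹ = 1 := mul_inv_cancel₀ hE.ne'
    rw [show (a⁻¹ + δ) * (a-δ) ^ μ * ((a ^ μ)⁻¹ * ((a-δ) ^ μ)⁻¹)
          = (a⁻¹ + δ) * (a ^ μ)⁻¹ * ((a-δ) ^ μ * ((a-δ) ^ μ)⁻¹) from by ring, c2, mul_one,
        show a ^ μ * ((a ^ μ)⁻¹ * ((a-δ) ^ μ)⁻¹)
          = (a ^ μ * (a ^ μ)⁻¹) * ((a-δ) ^ μ)⁻¹ from by ring, c1, one_mul] at h''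
    exact h''
  have eL1 : a ^ (-(1+μ)) = a⁻¹ * (a ^ μ)⁻¹ := by
    rw [show -(1+μ) = (-1) + (-μ) by ring, Real.rpow_add ha, Real.rpow_neg_one,
      Real.rpow_neg ha.le]
  have eL2 : a ^ (-μ) = (a ^ μ)⁻¹ := Real.rpow_neg ha.le μ
  have eL3 : (a-δ) ^ (-μ) = ((a-δ) ^ μ)⁻¹ := Real.rpow_neg haδ.le μ
  have eδ : 2 * μ⁻¹ = δ := by
    rw [hμdef]; field_simp
  rw [eL1, eL2, eL3, eδ]
  nlinarith [h5]

/-- The symmetric hyperbolic cross `Γ_±(s,T,a) = {k ∈ ℤ^s : ∏ (|k_i| + a) ≤ T}`. -/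
def hcGammaSym (s : ℕ) (T a : ℝ) : Set (Fin s → ℤ) :=
  {k | ∏ i, ((|k i| : ℝ) + a) ≤ T}

/-- for `s ∈ ℕ`, `a > 0`, `0 < δ ≤ 1` with `δ < a`, and `T > 0`,
`|Γ_±(s,T,a)| < 2δ⁻¹ · T^(1 + 2/δ) · (a − δ)^(−2s/δ)`. -/
theorem hcGammaSym_card_explicit (s : ℕ) (hs : 1 ≤ s) (a δ T : ℝ) (ha : 0 < a)
    (hδ0 : 0 < δ) (hδ1 : δ ≤ 1) (hδa : δ < a) (hT : 0 < T) :
    ((hcGammaSym s T a).ncard : ℝ) <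
      2 * δ⁻¹ * T ^ (1 + 2 / δ) * (a - δ) ^ (-(2 * s : ℝ) / δ) := by
  classical
  set μ : ℝ := 2/δ with hμdef
  have hμ0 : (0:ℝ) < μ := by rw [hμdef]; positivity
  have haδ : (0:ℝ) < a - δ := by linarith
  have hlam0 : (0:ℝ) ≤ 1 + μ := by linarith
  set M : ℕ := ⌈T / a ^ (s-1)⌉₊ with hMdef
  have haspos : (0:ℝ) < a ^ (s-1) := by positivity
  set B : Finset (Fin s → ℤ) :=
    Fintype.piFinset (fun _ : Fin s => Finset.Icc (-(M:ℤ)) (M:ℤ)) with hBdef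
  have hsub : ∀ k ∈ hcGammaSym s T a, k ∈ B := by
    intro k hk
    have hk' : ∏ j, (|(k j : ℝ)| + a) ≤ T := hk
    rw [hBdef, Fintype.mem_piFinset]
    intro i
    have h1 : ∏ _j ∈ Finset.univ.erase i, (a : ℝ) ≤
        ∏ j ∈ Finset.univ.erase i, (|(k j : ℝ)| + a) :=
      Finset.prod_le_prod (fun j _ => ha.le)
        (fun j _ => le_add_of_nonneg_left (abs_nonneg _))
    have hcard : (Finset.univ.erase i).card = s - 1 := by
      rw [Finset.card_erase_of_mem (Finset.mem_univ i), Finset.card_univ, Fintype.card_fin]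
    have h2 : ∏ _j ∈ Finset.univ.erase i, (a:ℝ) = a ^ (s-1) := by
      rw [Finset.prod_const, hcard]
    have h3 : (|(k i:ℝ)| + a) * ∏ j ∈ Finset.univ.erase i, (|(k j:ℝ)| + a)
        = ∏ j, (|(k j:ℝ)| + a) :=
      Finset.mul_prod_erase Finset.univ (fun j => (|(k j:ℝ)| + a)) (Finset.mem_univ i)
    have hprod : (|(k i : ℝ)| + a) * a ^ (s-1) ≤ T := by
      calc (|(k i:ℝ)| + a) * a ^ (s-1)
          ≤ (|(k i:ℝ)| + a) * ∏ j ∈ Finset.univ.erase i, (|(k j:ℝ)| + a) := by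
            rw [← h2]
            exact mul_le_mul_of_nonneg_left h1 (by positivity)
        _ = ∏ j, (|(k j:ℝ)| + a) := h3
        _ ≤ T := hk'
    have h4 : |(k i:ℝ)| + a ≤ T / a ^ (s-1) := by
      rw [le_div_iff₀ haspos]; exact hprod
    have h5 : T / a ^ (s-1) ≤ (M:ℝ) := Nat.le_ceil _
    have h6 : |(k i : ℝ)| < (M:ℝ) := by linarith
    have h7 : |k i| < (M:ℤ) := by
      rw [← Int.cast_abs] at h6
      exact_mod_cast h6
    rw [Finset.mem_Icc]
    exact abs_le.mp h7.le
  set F : Finset (Fin s → ℤ) :=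
    B.filter (fun k => ∏ i, (|(k i : ℝ)| + a) ≤ T) with hFdef
  have hΓ : hcGammaSym s T a = ↑F := by
    ext k
    simp only [hFdef, Finset.coe_filter, Set.mem_setOf_eq]
    constructor
    · intro h; exact ⟨hsub k h, h⟩
    · intro h; exact h.2
  rw [hΓ, Set.ncard_coe_finset]
  set S : ℝ := ∑ n ∈ Finset.Icc (-(M:ℤ)) (M:ℤ), (|(n : ℝ)| + a) ^ (-(1+μ)) with hSdef
  have hS0 : 0 ≤ S := Finset.sum_nonneg fun n _ =>
    Real.rpow_nonneg (add_nonneg (abs_nonneg _) ha.le) _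
  have hterm : ∀ k ∈ F, (1:ℝ) ≤ T ^ (1+μ) * ∏ i, (|(k i:ℝ)| + a) ^ (-(1+μ)) := by
    intro k hk
    have hkT : ∏ i, (|(k i:ℝ)| + a) ≤ T := (Finset.mem_filter.mp hk).2
    have hP : (0:ℝ) < ∏ i, (|(k i:ℝ)| + a) :=
      Finset.prod_pos fun i _ => by positivity
    have hprw : ∏ i, (|(k i:ℝ)| + a) ^ (-(1+μ))
        = ((∏ i, (|(k i:ℝ)| + a)) ^ (1+μ))⁻¹ := by
      rw [Real.finset_prod_rpow _ _ (fun i _ => add_nonneg (abs_nonneg _) ha.le) _,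
        Real.rpow_neg hP.le]
    rw [hprw]
    have hPT : (∏ i, (|(k i:ℝ)| + a)) ^ (1+μ) ≤ T ^ (1+μ) :=
      Real.rpow_le_rpow hP.le hkT hlam0
    have hPpow : (0:ℝ) < (∏ i, (|(k i:ℝ)| + a)) ^ (1+μ) := Real.rpow_pos_of_pos hP _
    calc (1:ℝ) = (∏ i, (|(k i:ℝ)| + a)) ^ (1+μ) * ((∏ i, (|(k i:ℝ)| + a)) ^ (1+μ))⁻¹ :=
        (mul_inv_cancel₀ hPpow.ne').symm
      _ ≤ T ^ (1+μ) * ((∏ i, (|(k i:ℝ)| + a)) ^ (1+μ))⁻¹ :=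
        mul_le_mul_of_nonneg_right hPT (inv_nonneg.2 hPpow.le)
  have hcount : (F.card : ℝ) ≤ T ^ (1+μ) * S ^ s := by
    calc (F.card : ℝ) = ∑ _k ∈ F, (1:ℝ) := by
          rw [Finset.sum_const, nsmul_eq_mul, mul_one]
      _ ≤ ∑ k ∈ F, T ^ (1+μ) * ∏ i, (|(k i:ℝ)| + a) ^ (-(1+μ)) := Finset.sum_le_sum hterm
      _ ≤ ∑ k ∈ B, T ^ (1+μ) * ∏ i, (|(k i:ℝ)| + a) ^ (-(1+μ)) :=
        Finset.sum_le_sum_of_subset_of_nonneg (Finset.filter_subset _ _)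
          (fun k _ _ => mul_nonneg (Real.rpow_nonneg hT.le _)
            (Finset.prod_nonneg fun i _ =>
              Real.rpow_nonneg (add_nonneg (abs_nonneg _) ha.le) _))
      _ = T ^ (1+μ) * ∑ k ∈ B, ∏ i, (|(k i:ℝ)| + a) ^ (-(1+μ)) := by
          rw [Finset.mul_sum]
      _ = T ^ (1+μ) * ∏ _i : Fin s, S := by
          have hps := Finset.prod_univ_sum (fun _ : Fin s => Finset.Icc (-(M:ℤ)) (M:ℤ))
            (fun _ n => (|(n:ℝ)| + a) ^ (-(1+μ)))
          rw [hSdef, hBdef, ← hps]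
      _ = T ^ (1+μ) * S ^ s := by
          rw [Finset.prod_const, Finset.card_univ, Fintype.card_fin]
  have hSD : S ≤ (a-δ) ^ (-μ) := by
    have h1 := hc_lemC hμ0 ha M
    have h2 : (0:ℝ) ≤ ((M:ℝ) + a) ^ (-μ) := Real.rpow_nonneg (by positivity) _
    have h3 := hc_lemD ha hδ0 hδ1 hδa
    rw [← hμdef] at h3
    have hμinv : (0:ℝ) < μ⁻¹ := by positivity
    rw [hSdef]
    nlinarith [h1, h2, h3, hμinv]
  have hpowD : S ^ s ≤ ((a-δ) ^ (-μ)) ^ s := pow_le_pow_left₀ hS0 hSD s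
  have hDs : ((a-δ) ^ (-μ)) ^ s = (a-δ) ^ (-(2 * s : ℝ) / δ) := by
    rw [← Real.rpow_natCast ((a-δ) ^ (-μ)) s, ← Real.rpow_mul haδ.le]
    congr 1
    rw [hμdef]
    field_simp
  have hTpos : (0:ℝ) < T ^ (1+μ) := Real.rpow_pos_of_pos hT _
  have hDpos : (0:ℝ) < (a-δ) ^ (-(2 * s : ℝ) / δ) := Real.rpow_pos_of_pos haδ _
  have hfac : (1:ℝ) < 2 * δ⁻¹ := by
    nlinarith [mul_inv_cancel₀ hδ0.ne', inv_pos.2 hδ0]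
  calc (F.card : ℝ) ≤ T ^ (1+μ) * S ^ s := hcount
    _ ≤ T ^ (1+μ) * ((a-δ) ^ (-μ)) ^ s :=
        mul_le_mul_of_nonneg_left hpowD hTpos.le
    _ = T ^ (1+μ) * (a-δ) ^ (-(2 * s : ℝ) / δ) := by rw [hDs]
    _ < 2 * δ⁻¹ * T ^ (1+μ) * (a-δ) ^ (-(2 * s : ℝ) / δ) := by
        have hq : (0:ℝ) < T ^ (1+μ) * (a-δ) ^ (-(2 * s : ℝ) / δ) := mul_pos hTpos hDpos
        nlinarith [hq, mul_pos (sub_pos.2 hfac) hq]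
end

section
/- Let r > 0, s ∈ ℕ, a > 0, and let U denote the unit ball of the modified Korobov space on 𝕋^s. For any q ∈ [2,∞) with λ := a − 2/q > 0 and every ε ∈ (0,1], the ε-dimension satisfies n_ε(U, L₂(𝕋^s)) ≤ q · λ^{−qs} · ε^{−(1+q)/r}. -/
open Real
open scoped ENNReal


/-- `λ_a(k) = ∏_j (a + |k_j|)`. -/
noncomputable def lamWeight {s : ℕ} (a : ℝ) (k : Fin s → ℤ) : ℝ :=
  ∏ j, (a + |(k j : ℝ)|)

/-- The `ε`-dimension of a subset `W` of a normed space: the minimal `N` such that some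
complex-linear subspace of dimension `≤ N` approximates every element of `W` within `ε`. -/
noncomputable def epsDim {H : Type*} [NormedAddCommGroup H] [NormedSpace ℂ H]
    (W : Set H) (ε : ℝ) : ℕ :=
  sInf {N : ℕ | ∃ L : Submodule ℂ H, FiniteDimensional ℂ L ∧
    Module.finrank ℂ L ≤ N ∧ ∀ f ∈ W, ∃ g ∈ L, ‖f - g‖ ≤ ε}

/-- The unit ball of the modified Korobov space, viewed inside `ℓ²(ℤ^s)` (identified with
`L₂(𝕋^s)` via the Fourier isometry): `∑_k λ_a(k)^{2r} |f̂(k)|² ≤ 1`. -/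
noncomputable def korobovBall (s : ℕ) (r a : ℝ) :
    Set (lp (fun _ : (Fin s → ℤ) => ℂ) 2) :=
  {f | ∑' k, ENNReal.ofReal (lamWeight a k ^ (2 * r) * ‖f k‖ ^ 2) ≤ 1}


lemma bernoulli_step {x q : ℝ} (hx : 0 < x) (hq : 1 ≤ q) :
    q * (x + 1) ^ (-(1 + q)) ≤ x ^ (-q) - (x + 1) ^ (-q) := by
  have hx1 : (0:ℝ) < x + 1 := by linarith
  have hq0 : (0:ℝ) < q := by linarith
  have hB : 1 + q * (1/x) ≤ (1 + 1/x) ^ q :=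
    one_add_mul_self_le_rpow_one_add (le_trans (by norm_num : (-1:ℝ) ≤ 0) (by positivity)) hq
  have h1x : (1 : ℝ) + 1/x = (x+1)/x := by field_simp
  have hdiv : ((x+1)/x) ^ q = (x+1) ^ q * x ^ (-q) := by
    rw [Real.div_rpow hx1.le hx.le, Real.rpow_neg hx.le, div_eq_mul_inv]
  have key2 : 1 + q/(x+1) ≤ (x+1) ^ q * x ^ (-q) := by
    rw [← hdiv, ← h1x]
    refine le_trans ?_ hB
    have : q/(x+1) ≤ q/x := by gcongr; linarith
    rw [mul_one_div]; linarith
  have hcancel : (x+1) ^ (-q) * (x+1) ^ q = 1 := by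
    rw [← Real.rpow_add hx1]; simp
  have key : (1 + q/(x+1)) * (x+1) ^ (-q) ≤ x ^ (-q) := by
    calc (1 + q/(x+1)) * (x+1) ^ (-q)
        ≤ ((x+1) ^ q * x ^ (-q)) * (x+1) ^ (-q) := by
          apply mul_le_mul_of_nonneg_right key2 (Real.rpow_nonneg hx1.le _)
      _ = x ^ (-q) * ((x+1) ^ (-q) * (x+1) ^ q) := by ring
      _ = x ^ (-q) := by rw [hcancel, mul_one]
  have expand : (1 + q/(x+1)) * (x+1) ^ (-q) =
      (x+1) ^ (-q) + q * (x+1) ^ (-(1+q)) := by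
    have h1 : (x+1) ^ (-(1+q)) = (x+1) ^ (-q) * (x+1)⁻¹ := by
      rw [← Real.rpow_neg_one (x+1), ← Real.rpow_add hx1]
      ring_nf
    rw [h1]; field_simp
  linarith [key, expand.symm.le, expand.le]

lemma oneD_tail {a q : ℝ} (ha : 0 < a) (hq : 2 ≤ q) (hlam : 0 < a - 2/q) :
    a ^ (-(1+q)) + (2/q) * a ^ (-q) ≤ (a - 2/q) ^ (-q) := by
  set l := a - 2/q with hl
  have hq0 : (0:ℝ) < q := by linarith
  have hδ : (0:ℝ) < 2/q := by positivity
  have hδ1 : 2/q ≤ 1 := by rw [div_le_one hq0]; linarith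
  have hla : l < a := by simp only [hl]; linarith
  have hB : 1 + q * ((2/q)/l) ≤ (1 + (2/q)/l) ^ q :=
    one_add_mul_self_le_rpow_one_add (le_trans (by norm_num : (-1:ℝ) ≤ 0) (by positivity)) (by linarith)
  have hal : a = l + 2/q := by rw [hl]; ring
  have e1 : 1 + (2/q)/l = a/l := by
    rw [hal]; field_simp
  have e2 : q * ((2/q)/l) = 2/l := by
    field_simp
  have hq' : (a/l) ^ q = a ^ q * l ^ (-q) := by
    rw [Real.div_rpow ha.le hlam.le, Real.rpow_neg hlam.le, div_eq_mul_inv]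
  have hstep : 1/a + 2/q ≤ a ^ q * l ^ (-q) := by
    have h1 : 1/a ≤ 2/l := by
      calc 1/a ≤ 1/l := by gcongr
        _ ≤ 2/l := by gcongr <;> norm_num
    calc 1/a + 2/q ≤ 1 + 2/l := by linarith
      _ ≤ a ^ q * l ^ (-q) := by rw [← hq', ← e1]; linarith [hB, e2]
  have lhs_eq : a ^ (-(1+q)) + (2/q) * a ^ (-q) = a ^ (-q) * (1/a + 2/q) := by
    rw [show -(1+q) = -q + -1 by ring, Real.rpow_add ha, Real.rpow_neg_one]
    ring
  have hcancel : a ^ (-q) * a ^ q = 1 := by rw [← Real.rpow_add ha]; simp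
  calc a ^ (-(1+q)) + (2/q) * a ^ (-q) = a ^ (-q) * (1/a + 2/q) := lhs_eq
    _ ≤ a ^ (-q) * (a ^ q * l ^ (-q)) := by
        apply mul_le_mul_of_nonneg_left hstep (Real.rpow_nonneg ha.le _)
    _ = (a ^ (-q) * a ^ q) * l ^ (-q) := by ring
    _ = l ^ (-q) := by rw [hcancel, one_mul]

lemma sum1d {a q : ℝ} (ha : 0 < a) (hq : 1 ≤ q) (M : ℕ) :
    ∑ m ∈ Finset.Icc (-(M:ℤ)) (M:ℤ), (a + |(m : ℝ)|) ^ (-(1+q)) ≤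
      a ^ (-(1+q)) + (2/q) * (a ^ (-q) - (a + M) ^ (-q)) := by
  have hq0 : (0:ℝ) < q := by linarith
  induction M with
  | zero => simp
  | succ n ih =>
    have hset : Finset.Icc (-((n:ℤ)+1)) ((n:ℤ)+1) =
        insert (-((n:ℤ)+1)) (insert ((n:ℤ)+1) (Finset.Icc (-(n:ℤ)) (n:ℤ))) := by
      ext m
      simp only [Finset.mem_Icc, Finset.mem_insert]
      omega
    have h1 : ((n:ℤ)+1 : ℤ) ∉ Finset.Icc (-(n:ℤ)) (n:ℤ) := by
      simp [Finset.mem_Icc]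
    have h2 : (-((n:ℤ)+1) : ℤ) ∉ insert ((n:ℤ)+1) (Finset.Icc (-(n:ℤ)) (n:ℤ)) := by
      simp only [Finset.mem_insert, Finset.mem_Icc]
      omega
    have hcast : ((n+1 : ℕ) : ℤ) = (n:ℤ) + 1 := by push_cast; ring
    rw [hcast, hset, Finset.sum_insert h2, Finset.sum_insert h1]
    have habs1 : |((-((n:ℤ)+1) : ℤ) : ℝ)| = (n:ℝ) + 1 := by
      push_cast
      rw [abs_neg, abs_of_nonneg (by positivity)]
    have habs2 : |(((n:ℤ)+1 : ℤ) : ℝ)| = (n:ℝ) + 1 := by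
      push_cast
      rw [abs_of_nonneg (by positivity)]
    rw [habs1, habs2]
    have hstep := bernoulli_step (x := a + n) (by positivity) hq
    have hre : a + (n:ℝ) + 1 = a + ((n:ℝ) + 1) := by ring
    rw [hre] at hstep
    have h2q : (0:ℝ) < 2/q := by positivity
    have hmul : 2 * (a + ((n:ℝ)+1)) ^ (-(1+q)) ≤
        (2/q) * ((a + n) ^ (-q) - (a + ((n:ℝ)+1)) ^ (-q)) := by
      have := mul_le_mul_of_nonneg_left hstep h2q.le
      calc 2 * (a + ((n:ℝ)+1)) ^ (-(1+q))
          = (2/q) * (q * (a + ((n:ℝ)+1)) ^ (-(1+q))) := by field_simp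
        _ ≤ (2/q) * ((a + n) ^ (-q) - (a + ((n:ℝ)+1)) ^ (-q)) := this
    push_cast
    push_cast at ih
    linarith [ih, hmul]

lemma oneD_total {a q : ℝ} (ha : 0 < a) (hq : 2 ≤ q) (hlam : 0 < a - 2/q) (M : ℤ) :
    ∑ m ∈ Finset.Icc (-M) M, (a + |(m:ℝ)|) ^ (-(1+q)) ≤ (a - 2/q) ^ (-q) := by
  have hq1 : (1:ℝ) ≤ q := by linarith
  have hq0 : (0:ℝ) < q := by linarith
  rcases le_or_gt 0 M with hM | hM
  · obtain ⟨N, rfl⟩ := Int.eq_ofNat_of_zero_le hM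
    have h1 := sum1d ha hq1 N
    have h2 := oneD_tail ha hq hlam
    have h3 : (0:ℝ) ≤ (a + N) ^ (-q) := Real.rpow_nonneg (by positivity) _
    have h4 : (0:ℝ) < 2/q := by positivity
    nlinarith [h1, h2, h3, h4]
  · have : Finset.Icc (-M) M = ∅ := by
      apply Finset.Icc_eq_empty
      omega
    rw [this]
    simp
    exact Real.rpow_nonneg hlam.le _

lemma lamWeight_pos {s : ℕ} {a : ℝ} (ha : 0 < a) (k : Fin s → ℤ) :
    0 < lamWeight a k :=
  Finset.prod_pos fun j _ => by positivity

/-- for `r > 0`, `a > 0`, any `q ∈ [2,∞)` with `λ := a − 2/q > 0` and any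
`ε ∈ (0,1]`, the ε-dimension of the Korobov unit ball satisfies
`n_ε ≤ q · λ^{−qs} · ε^{−(1+q)/r}`. -/
theorem epsDim_korobov_le (s : ℕ) (hs : 1 ≤ s) (r a q ε : ℝ) (hr : 0 < r) (ha : 0 < a)
    (hq : 2 ≤ q) (hlam : 0 < a - 2 / q) (hε0 : 0 < ε) (hε1 : ε ≤ 1) :
    (epsDim (korobovBall s r a) ε : ℝ) ≤
      q * (a - 2 / q) ^ (-(q * s)) * ε ^ (-(1 + q) / r) := by
  have hq0 : (0:ℝ) < q := by linarith
  have hr0 : r ≠ 0 := hr.ne'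
  set T : ℝ := ε ^ (-1/r) with hTdef
  have hT0 : 0 < T := Real.rpow_pos_of_pos hε0 _
  have hT1 : 1 ≤ T :=
    Real.one_le_rpow_of_pos_of_le_one_of_nonpos hε0 hε1
      (by rw [neg_div]; exact neg_nonpos.mpr (by positivity))
  set M : ℤ := ⌈T / a ^ (s-1)⌉ with hMdef
  set Γ : Finset (Fin s → ℤ) :=
    (Fintype.piFinset fun _ : Fin s => Finset.Icc (-M) M).filter
      (fun k => lamWeight a k ≤ T) with hΓdef
  -- completeness of Γ
  have hcomp : ∀ k : Fin s → ℤ, lamWeight a k ≤ T → k ∈ Γ := by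
    intro k hk
    rw [hΓdef, Finset.mem_filter]
    refine ⟨Fintype.mem_piFinset.mpr fun j => ?_, hk⟩
    have hpow : (0:ℝ) < a ^ (s-1) := by positivity
    have h1 : a ^ (s-1) * (a + |(k j : ℝ)|) ≤ lamWeight a k := by
      have he : lamWeight a k =
          (a + |(k j : ℝ)|) * ∏ i ∈ Finset.univ.erase j, (a + |(k i : ℝ)|) :=
        (Finset.mul_prod_erase Finset.univ _ (Finset.mem_univ j)).symm
      have hcarderase : (Finset.univ.erase j).card = s - 1 := by
        rw [Finset.card_erase_of_mem (Finset.mem_univ j), Finset.card_univ,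
          Fintype.card_fin]
      have h2 : a ^ (s-1) ≤ ∏ i ∈ Finset.univ.erase j, (a + |(k i : ℝ)|) := by
        rw [← hcarderase, ← Finset.prod_const]
        exact Finset.prod_le_prod (fun i _ => ha.le) (fun i _ => by
          simpa using abs_nonneg ((k i : ℝ)))
      rw [he]
      calc a ^ (s-1) * (a + |(k j : ℝ)|)
          ≤ (∏ i ∈ Finset.univ.erase j, (a + |(k i : ℝ)|)) * (a + |(k j : ℝ)|) := by
            apply mul_le_mul_of_nonneg_right h2 (by positivity)
        _ = (a + |(k j : ℝ)|) * ∏ i ∈ Finset.univ.erase j, (a + |(k i : ℝ)|) := by ring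
    have h3 : a + |(k j : ℝ)| ≤ T / a ^ (s-1) := by
      rw [le_div_iff₀ hpow]
      calc (a + |(k j : ℝ)|) * a ^ (s-1) = a ^ (s-1) * (a + |(k j : ℝ)|) := by ring
        _ ≤ lamWeight a k := h1
        _ ≤ T := hk
    have h4 : |(k j : ℝ)| ≤ (M : ℝ) := by
      calc |(k j : ℝ)| ≤ a + |(k j : ℝ)| := by linarith
        _ ≤ T / a ^ (s-1) := h3
        _ ≤ (M : ℝ) := Int.le_ceil _
    have h5 : |k j| ≤ M := by exact_mod_cast (by push_cast; exact h4 : ((|k j| : ℤ) : ℝ) ≤ (M:ℝ))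
    simpa [Finset.mem_Icc] using abs_le.mp h5
  -- cardinality bound for Γ
  have hone : ∀ k ∈ Γ, (1:ℝ) ≤ T ^ (1+q) * lamWeight a k ^ (-(1+q)) := by
    intro k hk
    have hlk : lamWeight a k ≤ T := (Finset.mem_filter.mp hk).2
    have hlk0 : 0 < lamWeight a k := lamWeight_pos ha k
    have h1 : (1:ℝ) ≤ (T / lamWeight a k) ^ (1+q) := by
      conv_lhs => rw [show (1:ℝ) = 1 ^ (1+q) from (Real.one_rpow _).symm]
      apply Real.rpow_le_rpow (by norm_num) ((one_le_div hlk0).mpr hlk) (by linarith)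
    calc (1:ℝ) ≤ (T / lamWeight a k) ^ (1+q) := h1
      _ = T ^ (1+q) * lamWeight a k ^ (-(1+q)) := by
        rw [Real.div_rpow hT0.le hlk0.le, Real.rpow_neg hlk0.le, div_eq_mul_inv]
  have hcard : (Γ.card : ℝ) ≤ T ^ (1+q) * ((a - 2/q) ^ (-q)) ^ s := by
    calc (Γ.card : ℝ) = ∑ _k ∈ Γ, (1:ℝ) := by simp
      _ ≤ ∑ k ∈ Γ, T ^ (1+q) * lamWeight a k ^ (-(1+q)) := Finset.sum_le_sum hone
      _ = T ^ (1+q) * ∑ k ∈ Γ, lamWeight a k ^ (-(1+q)) := by rw [Finset.mul_sum]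
      _ ≤ T ^ (1+q) * ∑ k ∈ (Fintype.piFinset fun _ : Fin s => Finset.Icc (-M) M),
            lamWeight a k ^ (-(1+q)) := by
          apply mul_le_mul_of_nonneg_left _ (Real.rpow_nonneg hT0.le _)
          apply Finset.sum_le_sum_of_subset_of_nonneg (Finset.filter_subset _ _)
          intro k _ _
          exact Real.rpow_nonneg (lamWeight_pos ha k).le _
      _ = T ^ (1+q) * ∑ k ∈ (Fintype.piFinset fun _ : Fin s => Finset.Icc (-M) M),
            ∏ j, (a + |(k j : ℝ)|) ^ (-(1+q)) := by
          congr 1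
          apply Finset.sum_congr rfl
          intro k _
          rw [lamWeight, ← Real.finset_prod_rpow _ _ (fun i _ => by positivity)]
      _ = T ^ (1+q) * ∏ _j : Fin s, ∑ m ∈ Finset.Icc (-M) M, (a + |(m : ℝ)|) ^ (-(1+q)) := by
          rw [Finset.prod_univ_sum]
      _ ≤ T ^ (1+q) * ∏ _j : Fin s, (a - 2/q) ^ (-q) := by
          apply mul_le_mul_of_nonneg_left _ (Real.rpow_nonneg hT0.le _)
          apply Finset.prod_le_prod
          · intro j _
            apply Finset.sum_nonneg
            intro m _
            exact Real.rpow_nonneg (by positivity) _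
          · intro j _
            exact oneD_total ha hq hlam M
      _ = T ^ (1+q) * ((a - 2/q) ^ (-q)) ^ s := by
          rw [Finset.prod_const, Finset.card_univ, Fintype.card_fin]
  -- the approximating subspace
  classical
  set L : Submodule ℂ (lp (fun _ : (Fin s → ℤ) => ℂ) 2) :=
    Submodule.span ℂ ((Γ.image fun k => lp.single 2 k (1:ℂ)) : Set _) with hLdef
  have hfd : FiniteDimensional ℂ L :=
    FiniteDimensional.span_of_finite ℂ (Finset.finite_toSet _)
  have hrank : Module.finrank ℂ L ≤ Γ.card := by
    have h1 := finrank_span_finset_le_card (R := ℂ) (Γ.image fun k => lp.single 2 k (1:ℂ))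
    rw [Set.finrank] at h1
    exact le_trans h1 (Finset.card_image_le)
  -- approximation property
  have happrox : ∀ f ∈ korobovBall s r a, ∃ g ∈ L, ‖f - g‖ ≤ ε := by
    intro f hf
    set g : lp (fun _ : (Fin s → ℤ) => ℂ) 2 := ∑ k ∈ Γ, lp.single 2 k (f k) with hgdef
    have hgL : g ∈ L := by
      rw [hgdef]
      apply Submodule.sum_mem
      intro k hk
      have : lp.single (E := fun _ : (Fin s → ℤ) => ℂ) 2 k (f k) =
          (f k) • lp.single (E := fun _ : (Fin s → ℤ) => ℂ) 2 k (1:ℂ) := by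
        rw [← lp.single_smul]
        congr 1
        simp [smul_eq_mul]
      rw [this]
      exact Submodule.smul_mem _ _ (Submodule.subset_span (Finset.mem_coe.mpr
        (Finset.mem_image_of_mem _ hk)))
    refine ⟨g, hgL, ?_⟩
    have hcoe : ∀ j, (⇑(f - g) : (Fin s → ℤ) → ℂ) j = if j ∈ Γ then 0 else f j := by
      intro j
      rw [lp.coeFn_sub, Pi.sub_apply, hgdef, lp.coeFn_sum, Finset.sum_apply]
      simp only [lp.single_apply]
      simp only [Pi.single_apply]
      by_cases hj : j ∈ Γ <;> simp [hj]
    -- pointwise bound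
    have hpt : ∀ j, ‖(⇑(f - g) : (Fin s → ℤ) → ℂ) j‖ ^ (2:ℝ) ≤
        ε ^ 2 * (lamWeight a j ^ (2*r) * ‖f j‖ ^ 2) := by
      intro j
      rw [hcoe j]
      by_cases hj : j ∈ Γ
      · simp only [if_pos hj, norm_zero]
        rw [Real.zero_rpow (by norm_num)]
        have := lamWeight_pos ha j
        positivity
      · simp only [if_neg hj]
        rw [Real.rpow_two]
        have hTj : T < lamWeight a j := by
          by_contra hcon
          exact hj (hcomp j (not_lt.mp hcon))
        have hT2r : T ^ (2*r) = (ε ^ 2)⁻¹ := by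
          rw [hTdef, ← Real.rpow_natCast ε 2, ← Real.rpow_neg hε0.le,
            ← Real.rpow_mul hε0.le]
          congr 1
          push_cast
          field_simp
        have hl2r : (ε^2)⁻¹ ≤ lamWeight a j ^ (2*r) := by
          rw [← hT2r]
          exact Real.rpow_le_rpow hT0.le hTj.le (by positivity)
        have hε2 : (0:ℝ) < ε ^ 2 := by positivity
        have h1 : (1:ℝ) ≤ ε ^ 2 * lamWeight a j ^ (2*r) := by
          calc (1:ℝ) = ε^2 * (ε^2)⁻¹ := by field_simp
            _ ≤ ε^2 * lamWeight a j ^ (2*r) := by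
              apply mul_le_mul_of_nonneg_left hl2r hε2.le
        calc ‖f j‖ ^ 2 = 1 * ‖f j‖ ^ 2 := (one_mul _).symm
          _ ≤ (ε ^ 2 * lamWeight a j ^ (2*r)) * ‖f j‖ ^ 2 := by
            apply mul_le_mul_of_nonneg_right h1 (by positivity)
          _ = ε ^ 2 * (lamWeight a j ^ (2*r) * ‖f j‖ ^ 2) := by ring
    -- tsum bound via ENNReal
    have hsummable : Summable fun j => ‖(⇑(f - g) : (Fin s → ℤ) → ℂ) j‖ ^ (2:ℝ) := by
      have h2 : (0:ℝ) < (2 : ℝ≥0∞).toReal := by norm_num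
      have := (lp.memℓp (f - g)).summable h2
      simpa using this
    have hkey : ∑' j, ‖(⇑(f - g) : (Fin s → ℤ) → ℂ) j‖ ^ (2:ℝ) ≤ ε ^ 2 := by
      have hEN : ∑' j, ENNReal.ofReal (‖(⇑(f - g) : (Fin s → ℤ) → ℂ) j‖ ^ (2:ℝ)) ≤
          ENNReal.ofReal (ε ^ 2) := by
        calc ∑' j, ENNReal.ofReal (‖(⇑(f - g) : (Fin s → ℤ) → ℂ) j‖ ^ (2:ℝ))
            ≤ ∑' j, ENNReal.ofReal (ε ^ 2 * (lamWeight a j ^ (2*r) * ‖f j‖ ^ 2)) :=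
              ENNReal.tsum_le_tsum fun j => ENNReal.ofReal_le_ofReal (hpt j)
          _ = ∑' j, ENNReal.ofReal (ε ^ 2) *
                ENNReal.ofReal (lamWeight a j ^ (2*r) * ‖f j‖ ^ 2) := by
              apply tsum_congr
              intro j
              rw [← ENNReal.ofReal_mul (by positivity)]
          _ = ENNReal.ofReal (ε ^ 2) *
                ∑' j, ENNReal.ofReal (lamWeight a j ^ (2*r) * ‖f j‖ ^ 2) :=
              ENNReal.tsum_mul_left
          _ ≤ ENNReal.ofReal (ε ^ 2) * 1 := by
              apply mul_le_mul_right hf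
          _ = ENNReal.ofReal (ε ^ 2) := mul_one _
      rw [← ENNReal.ofReal_tsum_of_nonneg (fun j => Real.rpow_nonneg (norm_nonneg _) _)
        hsummable] at hEN
      exact (ENNReal.ofReal_le_ofReal_iff (by positivity)).mp hEN
    have hnorm : ‖f - g‖ ^ (2:ℝ) = ∑' j, ‖(⇑(f - g) : (Fin s → ℤ) → ℂ) j‖ ^ (2:ℝ) := by
      have h2 : (0:ℝ) < (2 : ℝ≥0∞).toReal := by norm_num
      have := lp.norm_rpow_eq_tsum h2 (f - g)
      simpa using this
    have hfg2 : ‖f - g‖ ^ 2 ≤ ε ^ 2 := by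
      rw [← Real.rpow_two, hnorm]
      exact hkey
    exact le_of_sq_le_sq hfg2 hε0.le
  -- assemble
  have hmem : Γ.card ∈ {N : ℕ | ∃ L' : Submodule ℂ (lp (fun _ : (Fin s → ℤ) => ℂ) 2),
      FiniteDimensional ℂ L' ∧ Module.finrank ℂ L' ≤ N ∧
      ∀ f ∈ korobovBall s r a, ∃ g ∈ L', ‖f - g‖ ≤ ε} :=
    ⟨L, hfd, hrank, happrox⟩
  have hdim : epsDim (korobovBall s r a) ε ≤ Γ.card := Nat.sInf_le hmem
  have hsize : T ^ (1+q) * ((a - 2/q) ^ (-q)) ^ s ≤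
      q * (a - 2/q) ^ (-(q * s)) * ε ^ (-(1 + q) / r) := by
    have e1 : T ^ (1+q) = ε ^ (-(1 + q) / r) := by
      rw [hTdef, ← Real.rpow_mul hε0.le]
      congr 1
      field_simp
    have e2 : ((a - 2/q) ^ (-q)) ^ s = (a - 2/q) ^ (-(q * s)) := by
      rw [← Real.rpow_natCast ((a - 2/q) ^ (-q)) s, ← Real.rpow_mul hlam.le]
      congr 1
      ring
    rw [e1, e2]
    have hpos : (0:ℝ) ≤ (a - 2/q) ^ (-(q * (s:ℝ))) * ε ^ (-(1 + q) / r) := by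
      apply mul_nonneg (Real.rpow_nonneg hlam.le _) (Real.rpow_nonneg hε0.le _)
    calc ε ^ (-(1 + q) / r) * (a - 2/q) ^ (-(q * (s:ℝ)))
        = 1 * ((a - 2/q) ^ (-(q * (s:ℝ))) * ε ^ (-(1 + q) / r)) := by ring
      _ ≤ q * ((a - 2/q) ^ (-(q * (s:ℝ))) * ε ^ (-(1 + q) / r)) := by
          apply mul_le_mul_of_nonneg_right (by linarith) hpos
      _ = q * (a - 2/q) ^ (-(q * (s:ℝ))) * ε ^ (-(1 + q) / r) := by ring
  calc (epsDim (korobovBall s r a) ε : ℝ) ≤ (Γ.card : ℝ) := by exact_mod_cast hdim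
    _ ≤ T ^ (1+q) * ((a - 2/q) ^ (-q)) ^ s := hcard
    _ ≤ q * (a - 2/q) ^ (-(q * s)) * ε ^ (-(1 + q) / r) := hsize
end
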